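/- arXiv:2010.08988 — 2 statements merged into one kernel-verified Lean document; each statement's English description precedes it below -/
import Mathlib

section
/- Let n₁, n₂, n₃ ≥ 1 be integers. Then 𝒟(n₁,n₂,n₃) has an odd dijoin if and only if one of the following holds: (i) n₂ = 1; (ii) n₂ = 2 and n₁ ≡ n₃ (mod 2); (iii) n₂ ≥ 3 and n₁ ≡ n₃ ≡ 1 (mod 2). -/
open Relation

/-! ## Finite directed multigraphs -/

/-- A finite directed multigraph: finite vertex and edge types together with
tail and head maps (loops and parallel/anti-parallel edges are allowed). -/
structure MultiDigraph : Type 1 where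
  V : Type
  E : Type
  [fv : Fintype V]
  [fe : Fintype E]
  [dv : DecidableEq V]
  [de : DecidableEq E]
  tail : E → V
  head : E → V

attribute [instance] MultiDigraph.fv MultiDigraph.fe MultiDigraph.dv MultiDigraph.de

namespace MultiDigraph

variable (D : MultiDigraph)

/-- The set of edges crossing the partition `(X, Xᶜ)` of the vertex set. -/
def cutAt (X : Set D.V) : Set D.E :=
  {e | (D.tail e ∈ X ∧ D.head e ∉ X) ∨ (D.tail e ∉ X ∧ D.head e ∈ X)}

/-- A cut: a nonempty set of edges of the form `cutAt X`. -/
def IsCut (S : Set D.E) : Prop := S.Nonempty ∧ ∃ X : Set D.V, S = D.cutAt X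

/-- A bond: a cut containing no other cut properly. -/
def IsBond (S : Set D.E) : Prop := D.IsCut S ∧ ∀ S', D.IsCut S' → S' ⊆ S → S' = S

/-- A directed cut: a nonempty cut `cutAt X` such that no edge enters `X`. -/
def IsDirectedCut (S : Set D.E) : Prop :=
  S.Nonempty ∧ ∃ X : Set D.V, S = D.cutAt X ∧ ∀ e : D.E, ¬(D.tail e ∉ X ∧ D.head e ∈ X)

/-- A directed bond: a bond which is a directed cut. -/
def IsDirectedBond (S : Set D.E) : Prop := D.IsBond S ∧ D.IsDirectedCut S

/-- An odd dijoin: an edge set meeting every directed bond an odd number of times. -/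
def IsOddDijoin (J : Set D.E) : Prop := ∀ S : Set D.E, D.IsDirectedBond S → Odd (J ∩ S).ncard

def HasOddDijoin : Prop := ∃ J : Set D.E, D.IsOddDijoin J

/-- One-step relation used for weak connectivity of the subgraph spanned by `A`:
`x` and `y` are joined by an edge of `A`. -/
def touchRel (A : Set D.E) : D.V → D.V → Prop :=
  fun x y => ∃ e ∈ A, D.tail e = x ∧ D.head e = y

/-- Contraction `D/A`: delete the edges of `A` and identify each weak component of `D[A]`. -/
noncomputable def contract (A : Set D.E) : MultiDigraph :=
  letI s := EqvGen.setoid (D.touchRel A)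
  { V := Quotient s
    E := {e : D.E // e ∉ A}
    fv := Fintype.ofFinite _
    fe := Fintype.ofFinite _
    dv := Classical.decEq _
    de := Classical.decEq _
    tail := fun e => Quotient.mk s (D.tail e.1)
    head := fun e => Quotient.mk s (D.head e.1) }

/-- A step of a directed walk. -/
def dstep : D.V → D.V → Prop := fun a b => ∃ e : D.E, D.tail e = a ∧ D.head e = b

/-- A step of a directed walk avoiding a fixed edge `e₀`. -/
def dstepAvoiding (e₀ : D.E) : D.V → D.V → Prop :=
  fun a b => ∃ e : D.E, e ≠ e₀ ∧ D.tail e = a ∧ D.head e = b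

/-- An edge is deletable if it is not a loop and there is a directed path from its tail
to its head not using it. -/
def Deletable (e : D.E) : Prop :=
  D.tail e ≠ D.head e ∧ ReflTransGen (D.dstepAvoiding e) (D.tail e) (D.head e)

/-- Deleting one edge. -/
noncomputable def deleteEdge (e : D.E) : MultiDigraph where
  V := D.V
  E := {f : D.E // f ≠ e}
  fv := D.fv
  fe := Fintype.ofFinite _
  dv := D.dv
  de := Classical.decEq _
  tail := fun f => D.tail f.1
  head := fun f => D.head f.1

/-- An isolated vertex. -/
def Isolated (v : D.V) : Prop := ∀ e : D.E, D.tail e ≠ v ∧ D.head e ≠ v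

/-- Deleting an isolated vertex. -/
noncomputable def deleteVertex (v : D.V) (h : D.Isolated v) : MultiDigraph where
  V := {u : D.V // u ≠ v}
  E := D.E
  fv := Fintype.ofFinite _
  fe := D.fe
  dv := Classical.decEq _
  de := D.de
  tail := fun e => ⟨D.tail e, (h e).1⟩
  head := fun e => ⟨D.head e, (h e).2⟩

/-- A digraph is acyclic if it has no directed cycle. -/
def Acyclic : Prop := ∀ a b : D.V, D.dstep a b → ¬ ReflTransGen D.dstep b a

/-- A step of an undirected walk. -/
def ustep : D.V → D.V → Prop :=
  fun a b => ∃ e : D.E, (D.tail e = a ∧ D.head e = b) ∨ (D.tail e = b ∧ D.head e = a)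

/-- Weak connectivity. -/
def WeaklyConnected : Prop := ∀ a b : D.V, ReflTransGen D.ustep a b

/-- A step of an undirected walk avoiding the vertex `v`. -/
def ustepAvoiding (v : D.V) : D.V → D.V → Prop :=
  fun a b => a ≠ v ∧ b ≠ v ∧ D.ustep a b

/-- The underlying multigraph is 2-vertex-connected. -/
def TwoConnected : Prop :=
  3 ≤ Fintype.card D.V ∧ D.WeaklyConnected ∧
    ∀ v a b : D.V, a ≠ v → b ≠ v → ReflTransGen (D.ustepAvoiding v) a b

/-- `D` is an oriented graph: no loops and no pair of parallel or anti-parallel edges. -/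
def Oriented : Prop :=
  (∀ e : D.E, D.tail e ≠ D.head e) ∧
    ∀ e f : D.E, e ≠ f → ({D.tail e, D.head e} : Set D.V) ≠ {D.tail f, D.head f}

/-- `D` is transitively reduced: no edge of `D` is deletable. -/
def TransitivelyReduced : Prop := ∀ e : D.E, ¬ D.Deletable e

end MultiDigraph

/-! ## Digraph isomorphism -/

/-- An isomorphism of directed multigraphs. -/
structure DigraphIso (D₁ D₂ : MultiDigraph) where
  vmap : D₁.V ≃ D₂.V
  emap : D₁.E ≃ D₂.E
  tail_eq : ∀ e, D₂.tail (emap e) = vmap (D₁.tail e)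
  head_eq : ∀ e, D₂.head (emap e) = vmap (D₁.head e)

def IsIsomorphic (D₁ D₂ : MultiDigraph) : Prop := Nonempty (DigraphIso D₁ D₂)

/-! ## Cut minors -/

/-- A single cut-minor step: contraction of an edge, deletion of a deletable edge, or
deletion of an isolated vertex. -/
inductive CutMinorStep : MultiDigraph → MultiDigraph → Prop
  | contractEdge (D : MultiDigraph) (e : D.E) : CutMinorStep (D.contract {e}) D
  | delEdge (D : MultiDigraph) (e : D.E) (h : D.Deletable e) : CutMinorStep (D.deleteEdge e) D
  | delVertex (D : MultiDigraph) (v : D.V) (h : D.Isolated v) :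
      CutMinorStep (D.deleteVertex v h) D

/-- `D₁` is a cut minor of `D₂`. -/
def IsCutMinor (D₁ D₂ : MultiDigraph) : Prop := ReflTransGen CutMinorStep D₁ D₂

/-- A proper cut minor: a cut minor which is not isomorphic to the digraph itself. -/
def IsProperCutMinor (D₁ D₂ : MultiDigraph) : Prop :=
  IsCutMinor D₁ D₂ ∧ ¬ IsIsomorphic D₁ D₂

/-- A minimal obstruction: a digraph without an odd dijoin all of whose proper cut minors
have an odd dijoin. -/
def MinimalObstruction (D : MultiDigraph) : Prop :=
  ¬ D.HasOddDijoin ∧ ∀ D' : MultiDigraph, IsProperCutMinor D' D → D'.HasOddDijoin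

/-! ## Cycles and forests in the underlying multigraph -/

namespace MultiDigraph

variable (D : MultiDigraph)

/-- `X : D.E → SignType` is the signed incidence vector of a cycle of the underlying
multigraph of `D`, signs recording forward/backward edges of a cyclic traversal. -/
def IsSignedCycle (X : D.E → SignType) : Prop :=
  ∃ n : ℕ, 0 < n ∧ ∃ (v : ZMod n → D.V) (ed : ZMod n → D.E) (dir : ZMod n → Bool),
    Function.Injective v ∧ Function.Injective ed ∧
    (∀ i, (dir i = true → D.tail (ed i) = v i ∧ D.head (ed i) = v (i + 1)) ∧
      (dir i = false → D.tail (ed i) = v (i + 1) ∧ D.head (ed i) = v i)) ∧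
    (∀ i, X (ed i) = if dir i then 1 else -1) ∧
    (∀ f, (∀ i, ed i ≠ f) → X f = 0)

/-- The sub-multigraph spanned by `A` is a forest: it contains no cycle. -/
def IsForestOn (A : Set D.E) : Prop :=
  ¬ ∃ X : D.E → SignType, D.IsSignedCycle X ∧ ∀ e : D.E, X e ≠ 0 → e ∈ A

end MultiDigraph

/-! ## The cut space over 𝔽₂ -/

/-- Indicator vector of a set, over `𝔽₂ = ZMod 2`. -/
noncomputable def eindicator {α : Type} (C : Set α) : α → ZMod 2 := C.indicator 1

namespace MultiDigraph

variable (D : MultiDigraph)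

/-- The cut space of (the underlying multigraph of) `D`: the `𝔽₂`-span of the
indicator vectors of the bonds. -/
noncomputable def cutSpace : Submodule (ZMod 2) (D.E → ZMod 2) :=
  Submodule.span (ZMod 2) (eindicator '' {S : Set D.E | D.IsBond S})

/-- `ℬ` is a basis of the cut space of `D` (a family of edge sets whose indicator
vectors are linearly independent and span the cut space). -/
noncomputable def IsCutSpaceBasis (ℬ : Set (Set D.E)) : Prop :=
  LinearIndependent (ZMod 2) (fun S : ℬ => eindicator (S : Set D.E)) ∧
    Submodule.span (ZMod 2) (eindicator '' ℬ) = D.cutSpace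

end MultiDigraph

/-! ## Special digraphs -/

/-- The digraph `𝒟(n₀,n₁,n₂)`: three layers, with all edges from layer 0 to layer 1 and
from layer 1 to layer 2. -/
def layeredD (n₀ n₁ n₂ : ℕ) : MultiDigraph where
  V := (Fin n₀ ⊕ Fin n₁) ⊕ Fin n₂
  E := (Fin n₀ × Fin n₁) ⊕ (Fin n₁ × Fin n₂)
  tail := Sum.elim (fun p => Sum.inl (Sum.inl p.1)) (fun p => Sum.inl (Sum.inr p.1))
  head := Sum.elim (fun p => Sum.inl (Sum.inr p.2)) (fun p => Sum.inr p.2)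

/-- `K⃗_{m,n}`: the complete bipartite graph oriented from the class of size `m` to the
class of size `n`. -/
def oneDirK (m n : ℕ) : MultiDigraph where
  V := Fin m ⊕ Fin n
  E := Fin m × Fin n
  tail := fun p => Sum.inl p.1
  head := fun p => Sum.inr p.2

/-- A diamond: two hubs and `n` further vertices, each of which is either a source with its
two edges going to the hubs, or a sink with its two edges coming from the hubs
(`σ i = true` meaning `xᵢ` is a source). -/
def diamondD (n : ℕ) (σ : Fin n → Bool) : MultiDigraph where
  V := Fin n ⊕ Fin 2
  E := Fin n × Fin 2
  tail := fun p => if σ p.1 then Sum.inl p.1 else Sum.inr p.2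
  head := fun p => if σ p.1 then Sum.inr p.2 else Sum.inl p.1

/-- The bicycle `C⃡_k`: the cycle of length `k` with every edge replaced by a pair of
anti-parallel directed edges. -/
noncomputable def bicycle (k : ℕ) (hk : k ≠ 0) : MultiDigraph :=
  haveI : NeZero k := ⟨hk⟩
  { V := ZMod k
    E := ZMod k × Bool
    fv := inferInstance
    fe := inferInstance
    dv := inferInstance
    de := inferInstance
    tail := fun p => if p.2 then p.1 else p.1 + 1
    head := fun p => if p.2 then p.1 + 1 else p.1 }

/-- An odd diamond. -/
def IsOddDiamond (D : MultiDigraph) : Prop :=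
  ∃ (n : ℕ) (σ : Fin n → Bool), 3 ≤ n ∧ Odd (n + 2) ∧ IsIsomorphic D (diamondD n σ)

/-- An odd one-direction. -/
def IsOddOneDirection (D : MultiDigraph) : Prop :=
  ∃ m n : ℕ, 2 ≤ m ∧ 2 ≤ n ∧ Odd (m + n) ∧ IsIsomorphic D (oneDirK m n)

/-! ## Symmetric difference of a family of sets -/

/-- The symmetric difference of a finite family of sets. -/
def symmDiffFam {α : Type} {k : ℕ} (F : Fin k → Set α) : Set α :=
  {a | Odd ({i : Fin k | a ∈ F i}).ncard}

/-! ## Oriented matroids -/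

/-- Raw data of an oriented matroid: a finite ground set together with a collection of
signed subsets (encoded as functions to `SignType`). -/
structure PreOM : Type 1 where
  E : Type
  [fe : Fintype E]
  [de : DecidableEq E]
  circuits : Set (E → SignType)

attribute [instance] PreOM.fe PreOM.de

/-- The support of a signed set. -/
def sgnSupport {α : Type} (X : α → SignType) : Set α := {e | X e ≠ 0}

namespace PreOM

/-- The oriented matroid axioms for the collection of signed circuits. -/
def IsOM (M : PreOM) : Prop :=
  (0 : M.E → SignType) ∉ M.circuits ∧
  (∀ X ∈ M.circuits, -X ∈ M.circuits) ∧
  (∀ X ∈ M.circuits, ∀ Y ∈ M.circuits, sgnSupport X ⊆ sgnSupport Y → X = Y ∨ X = -Y) ∧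
  ∀ X ∈ M.circuits, ∀ Y ∈ M.circuits, X ≠ -Y → ∀ e : M.E, X e = 1 → Y e = -1 →
    ∃ Z ∈ M.circuits, (∀ f, Z f = 1 → f ≠ e ∧ (X f = 1 ∨ Y f = 1)) ∧
      ∀ f, Z f = -1 → f ≠ e ∧ (X f = -1 ∨ Y f = -1)

/-- The circuits of the underlying matroid: supports of signed circuits. -/
def UCircuits (M : PreOM) : Set (Set M.E) :=
  {C | ∃ X ∈ M.circuits, C = sgnSupport X}

/-- A directed circuit: the support of a signed circuit with empty negative part. -/
def IsDirectedCircuit (M : PreOM) (C : Set M.E) : Prop :=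
  ∃ X ∈ M.circuits, (∀ e, X e ≠ -1) ∧ C = {e | X e = 1}

/-- Independent sets of the underlying matroid. -/
def Indep (M : PreOM) (I : Set M.E) : Prop := ∀ C ∈ M.UCircuits, ¬ C ⊆ I

/-- Bases of the underlying matroid. -/
def IsBase (M : PreOM) (B : Set M.E) : Prop :=
  M.Indep B ∧ ∀ B', M.Indep B' → B ⊆ B' → B' = B

/-- Cocircuits of the underlying matroid: minimal sets meeting every base. -/
def IsCocircuit (M : PreOM) (S : Set M.E) : Prop :=
  (∀ B, M.IsBase B → (S ∩ B).Nonempty) ∧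
    ∀ S' : Set M.E, S' ⊂ S → ¬ ∀ B, M.IsBase B → (S' ∩ B).Nonempty

/-- Signed cocircuits: signed sets supported on a cocircuit and orthogonal to every
signed circuit. -/
def IsSignedCocircuit (M : PreOM) (Y : M.E → SignType) : Prop :=
  M.IsCocircuit (sgnSupport Y) ∧
    ∀ X ∈ M.circuits,
      ((∃ e, (Y e = 1 ∧ X e = 1) ∨ (Y e = -1 ∧ X e = -1)) ↔
        (∃ e, (Y e = 1 ∧ X e = -1) ∨ (Y e = -1 ∧ X e = 1)))

/-- An element `e` is butterfly-contractible if there is a cocircuit `S` with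
`(S \ {e}, {e})` a signed cocircuit. -/
def ButterflyContractible (M : PreOM) (e : M.E) : Prop :=
  ∃ Y : M.E → SignType, M.IsSignedCocircuit Y ∧ Y e = -1 ∧ ∀ f, f ≠ e → Y f ≠ -1

/-- Deletion of a set of elements. -/
noncomputable def deleteSet (M : PreOM) (A : Set M.E) : PreOM where
  E := {f : M.E // f ∉ A}
  fe := Fintype.ofFinite _
  de := Classical.decEq _
  circuits := {X : {f : M.E // f ∉ A} → SignType |
    ∃ X' ∈ M.circuits, (∀ a ∈ A, X' a = 0) ∧ ∀ f : {f : M.E // f ∉ A}, X f = X' f.1}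

/-- Contraction of a single element: signed circuits are the support-minimal nonempty
traces of signed circuits. -/
noncomputable def contractElem (M : PreOM) (e : M.E) : PreOM where
  E := {f : M.E // f ≠ e}
  fe := Fintype.ofFinite _
  de := Classical.decEq _
  circuits := {X : {f : M.E // f ≠ e} → SignType |
    X ≠ 0 ∧ ∃ X' ∈ M.circuits, (∀ f : {f : M.E // f ≠ e}, X f = X' f.1) ∧
      ¬ ∃ Z ∈ M.circuits, (sgnSupport Z \ {e}) ⊂ (sgnSupport X' \ {e})}

/-- Isomorphism of (pre-)oriented matroids. -/
def Iso (M N : PreOM) : Prop :=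
  ∃ σ : M.E ≃ N.E, ∀ X : N.E → SignType, X ∈ N.circuits ↔ (X ∘ σ) ∈ M.circuits

/-- A minimal dependent set of a vector configuration. -/
def IsMinimalDep {F : Type} [Field F] {n : ℕ} {E : Type} (φ : E → (Fin n → F))
    (C : Set E) : Prop :=
  ¬ LinearIndependent F (fun e : C => φ e.1) ∧
    ∀ C' : Set E, C' ⊂ C → LinearIndependent F (fun e : C' => φ e.1)

/-- The underlying matroid is regular: representable over every field. -/
def Regular (M : PreOM) : Prop :=
  ∀ (F : Type) [Field F], ∃ (n : ℕ) (φ : M.E → (Fin n → F)),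
    ∀ C : Set M.E, C ∈ M.UCircuits ↔ IsMinimalDep φ C

/-- `M` is non-even: its underlying matroid is regular and some set of elements meets
every directed circuit an odd number of times. -/
def NonEven (M : PreOM) : Prop :=
  M.Regular ∧ ∃ J : Set M.E, ∀ C : Set M.E, M.IsDirectedCircuit C → Odd (J ∩ C).ncard

/-- Totally cyclic: every element lies in a directed circuit. -/
def TotallyCyclic (M : PreOM) : Prop :=
  ∀ e : M.E, ∃ C : Set M.E, M.IsDirectedCircuit C ∧ e ∈ C

/-- Coindependent set: contains no cocircuit. -/
def Coindependent (M : PreOM) (A : Set M.E) : Prop :=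
  ∀ S : Set M.E, M.IsCocircuit S → ¬ S ⊆ A

/-- The circuit space of the underlying (binary) matroid, over `𝔽₂`. -/
noncomputable def circuitSpace (M : PreOM) : Submodule (ZMod 2) (M.E → ZMod 2) :=
  Submodule.span (ZMod 2) (eindicator '' M.UCircuits)

/-- A directed circuit basis: a family of directed circuits whose indicator vectors form a
basis of the circuit space. -/
noncomputable def IsDirectedCircuitBasis (M : PreOM) (ℬ : Set (Set M.E)) : Prop :=
  (∀ C ∈ ℬ, M.IsDirectedCircuit C) ∧
    LinearIndependent (ZMod 2) (fun C : ℬ => eindicator (C : Set M.E)) ∧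
    Submodule.span (ZMod 2) (eindicator '' ℬ) = M.circuitSpace

end PreOM

/-! ## GB-minors -/

/-- A single GB-minor step: deletion of an element, or contraction of a
butterfly-contractible element. -/
inductive GBStep : PreOM → PreOM → Prop
  | del (M : PreOM) (e : M.E) : GBStep (M.deleteSet {e}) M
  | con (M : PreOM) (e : M.E) (h : M.ButterflyContractible e) : GBStep (M.contractElem e) M

/-- `N` is a GB-minor of `M`. -/
def IsGBMinor (N M : PreOM) : Prop := ReflTransGen GBStep N M

/-! ## Oriented matroids from digraphs -/

/-- The oriented bond matroid `M*(D)` of a digraph `D`: signed circuits are the signed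
incidence vectors of the bonds of `D`. -/
def bondOM (D : MultiDigraph) : PreOM where
  E := D.E
  circuits := {X : D.E → SignType | ∃ W : Set D.V, D.IsBond (D.cutAt W) ∧
    ∀ e : D.E, (X e = 1 ↔ (D.tail e ∈ W ∧ D.head e ∉ W)) ∧
      (X e = -1 ↔ (D.head e ∈ W ∧ D.tail e ∉ W))}

/-- The oriented graphic matroid `M(D)` of a digraph `D`: signed circuits are the signed
incidence vectors of the cycles of the underlying multigraph of `D`. -/
def cycleOM (D : MultiDigraph) : PreOM where
  E := D.E
  circuits := {X : D.E → SignType | D.IsSignedCycle X}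



open Relation

namespace Stmt17
open MultiDigraph

lemma cutAt_compl (D : MultiDigraph) (X : Set D.V) : D.cutAt Xᶜ = D.cutAt X := by
  ext e; simp only [MultiDigraph.cutAt, Set.mem_setOf_eq, Set.mem_compl_iff, not_not]
  tauto

lemma isBond_of (D : MultiDigraph) (X : Set D.V) (hne : (D.cutAt X).Nonempty)
    (hc : ∀ Y : Set D.V, (∀ e, e ∉ D.cutAt X → (D.tail e ∈ Y ↔ D.head e ∈ Y)) →
      (∀ u v, u ∈ X → v ∈ X → (u ∈ Y ↔ v ∈ Y)) ∧
      (∀ u v, u ∉ X → v ∉ X → (u ∈ Y ↔ v ∈ Y))) :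
    D.IsBond (D.cutAt X) := by
  constructor
  · exact ⟨hne, X, rfl⟩
  · rintro S' ⟨hne', Y, rfl⟩ hsub
    have hcons : ∀ e, e ∉ D.cutAt X → (D.tail e ∈ Y ↔ D.head e ∈ Y) := by
      intro e he
      by_contra h
      have : e ∈ D.cutAt Y := by
        simp only [MultiDigraph.cutAt, Set.mem_setOf_eq]; tauto
      exact he (hsub this)
    obtain ⟨h1, h2⟩ := hc Y hcons
    obtain ⟨e₀, he₀⟩ := hne'
    have heX := hsub he₀
    simp only [MultiDigraph.cutAt, Set.mem_setOf_eq] at he₀ heX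
    have key : Y = X ∨ Y = Xᶜ := by
      rcases heX with ⟨ht, hh⟩ | ⟨ht, hh⟩ <;> rcases he₀ with ⟨ht', hh'⟩ | ⟨ht', hh'⟩
      · left; ext u; by_cases hu : u ∈ X
        · simp only [hu, iff_true]; exact (h1 u _ hu ht).mpr ht'
        · simp only [hu, iff_false]; exact fun huY => hh' ((h2 u _ hu hh).mp huY)
      · right; ext u; simp only [Set.mem_compl_iff]
        constructor
        · intro huY hu; exact ht' ((h1 u _ hu ht).mp huY)
        · intro hu; exact (h2 u _ hu hh).mpr hh'
      · right; ext u; simp only [Set.mem_compl_iff]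
        constructor
        · intro huY hu; exact hh' ((h1 u _ hu hh).mp huY)
        · intro hu; exact (h2 u _ hu ht).mpr ht'
      · left; ext u; by_cases hu : u ∈ X
        · simp only [hu, iff_true]; exact (h1 u _ hu hh).mpr hh'
        · simp only [hu, iff_false]; exact fun huY => ht' ((h2 u _ hu ht).mp huY)
    rcases key with rfl | rfl
    · rfl
    · exact cutAt_compl D X


section Layered
variable (n₁ n₂ n₃ : ℕ)

/-- `{a} × B` -/
def Sa (a : Fin n₁) : Set (layeredD n₁ n₂ n₃).E := {e | ∃ b, e = Sum.inl (a, b)}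
/-- `B × {c}` -/
def Sc (c : Fin n₃) : Set (layeredD n₁ n₂ n₃).E := {e | ∃ b, e = Sum.inr (b, c)}
/-- `A × (B∖T) ∪ T × C` -/
def Mt (T : Set (Fin n₂)) : Set (layeredD n₁ n₂ n₃).E :=
  {e | (∃ a b, b ∉ T ∧ e = Sum.inl (a, b)) ∨ (∃ b c, b ∈ T ∧ e = Sum.inr (b, c))}

/-- `A ∪ T` as a vertex set -/
def Xt (T : Set (Fin n₂)) : Set (layeredD n₁ n₂ n₃).V :=
  {v | (∃ a, v = Sum.inl (Sum.inl a)) ∨ (∃ b, b ∈ T ∧ v = Sum.inl (Sum.inr b))}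

variable {n₁ n₂ n₃ : ℕ}

lemma cutAt_singA (a : Fin n₁) :
    (layeredD n₁ n₂ n₃).cutAt {Sum.inl (Sum.inl a)} = Sa n₁ n₂ n₃ a := by
  ext e
  simp only [MultiDigraph.cutAt, Sa, Set.mem_setOf_eq]
  erw [Set.mem_singleton_iff, Set.mem_singleton_iff]
  rcases e with ⟨a', b⟩ | ⟨b, c⟩ <;>
    simp [layeredD, eq_comm]

lemma cutAt_singC (c : Fin n₃) :
    (layeredD n₁ n₂ n₃).cutAt {Sum.inr c} = Sc n₁ n₂ n₃ c := by
  ext e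
  simp only [MultiDigraph.cutAt, Sc, Set.mem_setOf_eq]
  erw [Set.mem_singleton_iff, Set.mem_singleton_iff]
  rcases e with ⟨a', b⟩ | ⟨b, c'⟩ <;>
    simp [layeredD, eq_comm]

lemma cutAt_Xt (T : Set (Fin n₂)) :
    (layeredD n₁ n₂ n₃).cutAt (Xt n₁ n₂ n₃ T) = Mt n₁ n₂ n₃ T := by
  ext e
  simp only [MultiDigraph.cutAt, Mt, Xt, Set.mem_setOf_eq]
  rcases e with ⟨a', b⟩ | ⟨b, c'⟩ <;>
    simp [layeredD, eq_comm] <;> aesop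


lemma notmem_Sa_inl {a a' : Fin n₁} {b : Fin n₂} (h : a' ≠ a) :
    (Sum.inl (a', b) : (layeredD n₁ n₂ n₃).E) ∉ Sa n₁ n₂ n₃ a := by
  rintro ⟨b', hb⟩; injection hb with h'; injection h' with h1 h2; exact h h1

lemma notmem_Sa_inr {a : Fin n₁} {b : Fin n₂} {c : Fin n₃} :
    (Sum.inr (b, c) : (layeredD n₁ n₂ n₃).E) ∉ Sa n₁ n₂ n₃ a := by
  rintro ⟨b', hb⟩; exact nomatch hb

lemma notmem_Sc_inl {a : Fin n₁} {b : Fin n₂} {c : Fin n₃} :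
    (Sum.inl (a, b) : (layeredD n₁ n₂ n₃).E) ∉ Sc n₁ n₂ n₃ c := by
  rintro ⟨b', hb⟩; exact nomatch hb

lemma notmem_Sc_inr {c c' : Fin n₃} {b : Fin n₂} (h : c' ≠ c) :
    (Sum.inr (b, c') : (layeredD n₁ n₂ n₃).E) ∉ Sc n₁ n₂ n₃ c := by
  rintro ⟨b', hb⟩; injection hb with h'; injection h' with h1 h2; exact h h2

lemma notmem_Mt_inl {T : Set (Fin n₂)} {a : Fin n₁} {b : Fin n₂} (h : b ∈ T) :
    (Sum.inl (a, b) : (layeredD n₁ n₂ n₃).E) ∉ Mt n₁ n₂ n₃ T := by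
  rintro (⟨a', b', hb', he⟩ | ⟨b', c', hb', he⟩)
  · injection he with h'; injection h' with ha hb; exact hb' (hb ▸ h)
  · exact nomatch he

lemma notmem_Mt_inr {T : Set (Fin n₂)} {b : Fin n₂} {c : Fin n₃} (h : b ∉ T) :
    (Sum.inr (b, c) : (layeredD n₁ n₂ n₃).E) ∉ Mt n₁ n₂ n₃ T := by
  rintro (⟨a', b', hb', he⟩ | ⟨b', c', hb', he⟩)
  · exact nomatch he
  · injection he with h'; injection h' with hb hc; exact h (hb ▸ hb')

lemma isDirectedBond_Sa (h₂ : 1 ≤ n₂) (h₃ : 1 ≤ n₃) (a : Fin n₁) :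
    (layeredD n₁ n₂ n₃).IsDirectedBond (Sa n₁ n₂ n₃ a) := by
  set b₀ : Fin n₂ := ⟨0, h₂⟩ with hb₀
  set c₀ : Fin n₃ := ⟨0, h₃⟩ with hc₀
  have hne : (Sa n₁ n₂ n₃ a).Nonempty := ⟨Sum.inl (a, b₀), ⟨b₀, rfl⟩⟩
  constructor
  · rw [← cutAt_singA]
    apply isBond_of
    · rw [cutAt_singA]; exact hne
    · intro Y hcons
      rw [cutAt_singA] at hcons
      constructor
      · intro u v hu hv
        erw [Set.mem_singleton_iff] at hu hv; rw [hu, hv]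
      · have key : ∀ u, u ∉ ({Sum.inl (Sum.inl a)} : Set (layeredD n₁ n₂ n₃).V) →
            (u ∈ Y ↔ (Sum.inl (Sum.inr b₀) : (layeredD n₁ n₂ n₃).V) ∈ Y) := by
          intro u hu
          rcases u with (a' | b) | c
          · have ha' : a' ≠ a := by
              erw [Set.mem_singleton_iff] at hu
              intro h; exact hu (by rw [h])
            exact hcons (Sum.inl (a', b₀)) (notmem_Sa_inl ha')
          · have e1 := hcons (Sum.inr (b, c₀)) notmem_Sa_inr
            have e2 := hcons (Sum.inr (b₀, c₀)) notmem_Sa_inr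
            exact e1.trans e2.symm
          · exact (hcons (Sum.inr (b₀, c)) notmem_Sa_inr).symm
        intro u v hu hv
        exact (key u hu).trans (key v hv).symm
  · refine ⟨hne, {Sum.inl (Sum.inl a)}, (cutAt_singA a).symm, ?_⟩
    rintro (⟨a', b⟩ | ⟨b, c⟩) <;> exact fun h => nomatch h.2

lemma isDirectedBond_Sc (h₁ : 1 ≤ n₁) (h₂ : 1 ≤ n₂) (c : Fin n₃) :
    (layeredD n₁ n₂ n₃).IsDirectedBond (Sc n₁ n₂ n₃ c) := by
  set a₀ : Fin n₁ := ⟨0, h₁⟩ with ha₀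
  set b₀ : Fin n₂ := ⟨0, h₂⟩ with hb₀
  have hne : (Sc n₁ n₂ n₃ c).Nonempty := ⟨Sum.inr (b₀, c), ⟨b₀, rfl⟩⟩
  constructor
  · rw [← cutAt_singC]
    apply isBond_of
    · rw [cutAt_singC]; exact hne
    · intro Y hcons
      rw [cutAt_singC] at hcons
      constructor
      · intro u v hu hv
        erw [Set.mem_singleton_iff] at hu hv; rw [hu, hv]
      · have key : ∀ u, u ∉ ({Sum.inr c} : Set (layeredD n₁ n₂ n₃).V) →
            (u ∈ Y ↔ (Sum.inl (Sum.inr b₀) : (layeredD n₁ n₂ n₃).V) ∈ Y) := by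
          intro u hu
          rcases u with (a' | b) | c'
          · exact hcons (Sum.inl (a', b₀)) notmem_Sc_inl
          · have e1 := hcons (Sum.inl (a₀, b)) notmem_Sc_inl
            have e2 := hcons (Sum.inl (a₀, b₀)) notmem_Sc_inl
            exact e1.symm.trans e2
          · have hc' : c' ≠ c := by
              erw [Set.mem_singleton_iff] at hu
              intro h; exact hu (by rw [h])
            exact (hcons (Sum.inr (b₀, c')) (notmem_Sc_inr hc')).symm
        intro u v hu hv
        exact (key u hu).trans (key v hv).symm
  · refine ⟨hne, {Sum.inr c}ᶜ, ?_, ?_⟩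
    · rw [cutAt_compl, cutAt_singC]
    · rintro (⟨a', b⟩ | ⟨b, c'⟩) <;> exact fun h => h.1 (fun h' => nomatch h')


lemma isDirectedBond_Mt (h₁ : 1 ≤ n₁) (h₃ : 1 ≤ n₃) {T : Set (Fin n₂)}
    (hT1 : T.Nonempty) (hT2 : T ≠ Set.univ) :
    (layeredD n₁ n₂ n₃).IsDirectedBond (Mt n₁ n₂ n₃ T) := by
  set a₀ : Fin n₁ := ⟨0, h₁⟩ with ha₀
  set c₀ : Fin n₃ := ⟨0, h₃⟩ with hc₀
  obtain ⟨t₀, ht₀⟩ := hT1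
  obtain ⟨b₁, hb₁⟩ : ∃ b, b ∉ T := by
    by_contra h; push_neg at h; exact hT2 (Set.eq_univ_of_forall h)
  have hne : (Mt n₁ n₂ n₃ T).Nonempty :=
    ⟨Sum.inr (t₀, c₀), Or.inr ⟨t₀, c₀, ht₀, rfl⟩⟩
  constructor
  · rw [← cutAt_Xt]
    apply isBond_of
    · rw [cutAt_Xt]; exact hne
    · intro Y hcons
      rw [cutAt_Xt] at hcons
      constructor
      · have key : ∀ u, u ∈ Xt n₁ n₂ n₃ T →
            (u ∈ Y ↔ (Sum.inl (Sum.inr t₀) : (layeredD n₁ n₂ n₃).V) ∈ Y) := by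
          rintro u (⟨a, rfl⟩ | ⟨b, hb, rfl⟩)
          · exact hcons (Sum.inl (a, t₀)) (notmem_Mt_inl ht₀)
          · have e1 := hcons (Sum.inl (a₀, b)) (notmem_Mt_inl hb)
            have e2 := hcons (Sum.inl (a₀, t₀)) (notmem_Mt_inl ht₀)
            exact e1.symm.trans e2
        intro u v hu hv
        exact (key u hu).trans (key v hv).symm
      · have key : ∀ u, u ∉ Xt n₁ n₂ n₃ T →
            (u ∈ Y ↔ (Sum.inr c₀ : (layeredD n₁ n₂ n₃).V) ∈ Y) := by
          intro u hu
          rcases u with (a | b) | c'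
          · exact absurd (Or.inl ⟨a, rfl⟩) hu
          · have hb : b ∉ T := fun hb => hu (Or.inr ⟨b, hb, rfl⟩)
            exact hcons (Sum.inr (b, c₀)) (notmem_Mt_inr hb)
          · have e1 := hcons (Sum.inr (b₁, c')) (notmem_Mt_inr hb₁)
            have e2 := hcons (Sum.inr (b₁, c₀)) (notmem_Mt_inr hb₁)
            exact e1.symm.trans e2
        intro u v hu hv
        exact (key u hu).trans (key v hv).symm
  · refine ⟨hne, Xt n₁ n₂ n₃ T, (cutAt_Xt T).symm, ?_⟩
    rintro (⟨a', b⟩ | ⟨b, c⟩)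
    · exact fun h => h.1 (Or.inl ⟨a', rfl⟩)
    · rintro ⟨_, (⟨a, ha⟩ | ⟨b', _, hb'⟩)⟩
      · exact nomatch ha
      · exact nomatch hb'

/-- Classification of directed bonds of the layered digraph. -/
lemma classify (h₁ : 1 ≤ n₁) (h₂ : 1 ≤ n₂) (h₃ : 1 ≤ n₃)
    {S : Set (layeredD n₁ n₂ n₃).E} (h : (layeredD n₁ n₂ n₃).IsDirectedBond S) :
    (∃ a, S = Sa n₁ n₂ n₃ a) ∨ (∃ c, S = Sc n₁ n₂ n₃ c) ∨
      (∃ T : Set (Fin n₂), T.Nonempty ∧ T ≠ Set.univ ∧ S = Mt n₁ n₂ n₃ T) := by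
  set b₀ : Fin n₂ := ⟨0, h₂⟩ with hb₀def
  obtain ⟨⟨hcut, hmin⟩, hne, X, hSX, hdir⟩ := h
  subst hSX
  have hcl : ∀ e : (layeredD n₁ n₂ n₃).E,
      (layeredD n₁ n₂ n₃).head e ∈ X → (layeredD n₁ n₂ n₃).tail e ∈ X := by
    intro e he
    by_contra ht
    exact hdir e ⟨ht, he⟩
  have claim1 : ∀ b : Fin n₂, Sum.inl (Sum.inr b) ∈ X →
      ∀ a : Fin n₁, Sum.inl (Sum.inl a) ∈ X := fun b hb a => hcl (Sum.inl (a, b)) hb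
  have claim2 : ∀ c : Fin n₃, Sum.inr c ∈ X →
      ∀ b : Fin n₂, Sum.inl (Sum.inr b) ∈ X := fun c hc b => hcl (Sum.inr (b, c)) hc
  by_cases hC : ∃ c, (Sum.inr c : (layeredD n₁ n₂ n₃).V) ∈ X
  · -- X meets C: S ⊇ some Sc
    obtain ⟨c, hc⟩ := hC
    have hB : ∀ b, Sum.inl (Sum.inr b) ∈ X := claim2 c hc
    have hA : ∀ a, Sum.inl (Sum.inl a) ∈ X := claim1 b₀ (hB b₀)
    obtain ⟨e₀, he₀⟩ := hne
    obtain ⟨c₀, hc₀⟩ : ∃ c₀, (Sum.inr c₀ : (layeredD n₁ n₂ n₃).V) ∉ X := by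
      rcases e₀ with ⟨a, b⟩ | ⟨b, c'⟩
      · rcases he₀ with ⟨_, hh⟩ | ⟨ht, _⟩
        · exact absurd (hB b) hh
        · exact absurd (hA a) ht
      · rcases he₀ with ⟨_, hh⟩ | ⟨ht, _⟩
        · exact ⟨c', hh⟩
        · exact absurd (hB b) ht
    have hsub : Sc n₁ n₂ n₃ c₀ ⊆ (layeredD n₁ n₂ n₃).cutAt X := by
      rintro e ⟨b, rfl⟩
      exact Or.inl ⟨hB b, hc₀⟩
    right; left
    exact ⟨c₀, (hmin (Sc n₁ n₂ n₃ c₀)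
      ⟨⟨Sum.inr (b₀, c₀), ⟨b₀, rfl⟩⟩, {Sum.inr c₀}ᶜ,
        by rw [cutAt_compl, cutAt_singC]⟩ hsub).symm⟩
  · push_neg at hC
    by_cases hBe : ∃ b, (Sum.inl (Sum.inr b) : (layeredD n₁ n₂ n₃).V) ∈ X
    · obtain ⟨b, hb⟩ := hBe
      have hA : ∀ a, Sum.inl (Sum.inl a) ∈ X := claim1 b hb
      set T : Set (Fin n₂) := {b | Sum.inl (Sum.inr b) ∈ X} with hT
      have hS : (layeredD n₁ n₂ n₃).cutAt X = Mt n₁ n₂ n₃ T := by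
        ext e
        rcases e with ⟨a, b'⟩ | ⟨b', c'⟩
        · constructor
          · rintro (⟨_, hh⟩ | ⟨ht, _⟩)
            · exact Or.inl ⟨a, b', hh, rfl⟩
            · exact absurd (hA a) ht
          · rintro (⟨a'', b'', hb'', he⟩ | ⟨b'', c'', _, he⟩)
            · injection he with h'; injection h' with ha' hb'
              exact Or.inl ⟨hA a, by rwa [hb']⟩
            · exact nomatch he
        · constructor
          · rintro (⟨ht, _⟩ | ⟨_, hh⟩)
            · exact Or.inr ⟨b', c', ht, rfl⟩
            · exact absurd hh (hC c')
          · rintro (⟨a'', b'', _, he⟩ | ⟨b'', c'', hb'', he⟩)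
            · exact nomatch he
            · injection he with h'; injection h' with hb' hc'
              exact Or.inl ⟨by rw [hb']; exact hb'', hC c'⟩
      by_cases hTu : T = Set.univ
      · set c₀ : Fin n₃ := ⟨0, h₃⟩ with hc₀def
        have hsub : Sc n₁ n₂ n₃ c₀ ⊆ (layeredD n₁ n₂ n₃).cutAt X := by
          rintro e ⟨b', rfl⟩
          rw [hS]; exact Or.inr ⟨b', c₀, by rw [hTu]; trivial, rfl⟩
        right; left
        exact ⟨c₀, (hmin (Sc n₁ n₂ n₃ c₀)
          ⟨⟨Sum.inr (b₀, c₀), ⟨b₀, rfl⟩⟩, {Sum.inr c₀}ᶜ,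
            by rw [cutAt_compl, cutAt_singC]⟩ hsub).symm⟩
      · right; right
        exact ⟨T, ⟨b, hb⟩, hTu, hS⟩
    · push_neg at hBe
      have hS : (layeredD n₁ n₂ n₃).cutAt X =
          {e | ∃ (a : Fin n₁) (b' : Fin n₂),
            Sum.inl (Sum.inl a) ∈ X ∧ e = Sum.inl (a, b')} := by
        ext e
        rcases e with ⟨a, b'⟩ | ⟨b', c'⟩
        · constructor
          · rintro (⟨ht, _⟩ | ⟨_, hh⟩)
            · exact ⟨a, b', ht, rfl⟩
            · exact absurd hh (hBe b')
          · rintro ⟨a'', b'', ha'', he⟩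
            injection he with h'; injection h' with ha' hb'
            exact Or.inl ⟨by rw [ha']; exact ha'', hBe b'⟩
        · constructor
          · rintro (⟨ht, _⟩ | ⟨_, hh⟩)
            · exact absurd ht (hBe b')
            · exact absurd hh (hC c')
          · rintro ⟨a'', b'', _, he⟩
            exact nomatch he
      obtain ⟨e₀, he₀⟩ := hne
      rw [hS] at he₀
      obtain ⟨a₀, b', ha₀, rfl⟩ := he₀
      have hsub : Sa n₁ n₂ n₃ a₀ ⊆ (layeredD n₁ n₂ n₃).cutAt X := by
        rintro e ⟨b'', rfl⟩
        rw [hS]; exact ⟨a₀, b'', ha₀, rfl⟩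
      left
      exact ⟨a₀, (hmin (Sa n₁ n₂ n₃ a₀)
        ⟨⟨Sum.inl (a₀, b₀), ⟨b₀, rfl⟩⟩, {Sum.inl (Sum.inl a₀)},
          (cutAt_singA a₀).symm⟩ hsub).symm⟩


open Classical in
/-- parity counter -/
noncomputable def F {α : Type} [Fintype α] (J S : Set α) : ZMod 2 :=
  ∑ e : α, if e ∈ J ∩ S then 1 else 0

lemma odd_ncard_iff {α : Type} [Fintype α] (J S : Set α) :
    Odd (J ∩ S).ncard ↔ F J S = 1 := by
  classical
  have h1 : (J ∩ S).ncard = (Finset.univ.filter (· ∈ J ∩ S)).card := by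
    rw [Set.ncard_eq_toFinset_card' (J ∩ S), ← Set.filter_mem_univ_eq_toFinset]
  have h2 : F J S = ((J ∩ S).ncard : ZMod 2) := by
    rw [h1, F, Finset.natCast_card_filter]
  rw [h2, h1]
  set n := (Finset.univ.filter (· ∈ J ∩ S)).card
  rw [Nat.odd_iff]
  constructor
  · intro h; rw [← ZMod.natCast_mod, h]; rfl
  · intro h
    rcases Nat.mod_two_eq_zero_or_one n with h0 | h0
    · rw [← ZMod.natCast_mod, h0] at h; exact absurd h (by decide)
    · exact h0


lemma mem_Sa_iff {a a' : Fin n₁} {b : Fin n₂} :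
    (Sum.inl (a', b) : (layeredD n₁ n₂ n₃).E) ∈ Sa n₁ n₂ n₃ a ↔ a' = a := by
  constructor
  · rintro ⟨b', hb⟩; injection hb with h'; injection h' with h1 h2
    all_goals exact h1
  · rintro rfl; exact ⟨b, rfl⟩

lemma mem_Sc_iff {c c' : Fin n₃} {b : Fin n₂} :
    (Sum.inr (b, c') : (layeredD n₁ n₂ n₃).E) ∈ Sc n₁ n₂ n₃ c ↔ c' = c := by
  constructor
  · rintro ⟨b', hb⟩; injection hb with h'; injection h' with h1 h2
    all_goals exact h2
  · rintro rfl; exact ⟨b, rfl⟩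

lemma mem_Mt_inl_iff {T : Set (Fin n₂)} {a : Fin n₁} {b : Fin n₂} :
    (Sum.inl (a, b) : (layeredD n₁ n₂ n₃).E) ∈ Mt n₁ n₂ n₃ T ↔ b ∉ T := by
  constructor
  · rintro (⟨a', b', hb', he⟩ | ⟨b', c', hb', he⟩)
    · injection he with h'; injection h' with ha hb; exact hb ▸ hb'
    · exact nomatch he
  · intro h; exact Or.inl ⟨a, b, h, rfl⟩

lemma mem_Mt_inr_iff {T : Set (Fin n₂)} {b : Fin n₂} {c : Fin n₃} :
    (Sum.inr (b, c) : (layeredD n₁ n₂ n₃).E) ∈ Mt n₁ n₂ n₃ T ↔ b ∈ T := by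
  constructor
  · rintro (⟨a', b', hb', he⟩ | ⟨b', c', hb', he⟩)
    · exact nomatch he
    · injection he with h'; injection h' with hb hc; exact hb ▸ hb'
  · intro h; exact Or.inr ⟨b, c, h, rfl⟩

end Layered
section Layered2
/-- The set of first-layer edges. -/
def AB (n₁ n₂ n₃ : ℕ) : Set (layeredD n₁ n₂ n₃).E := {e | ∃ p, e = Sum.inl p}
/-- The set of second-layer edges. -/
def BC (n₁ n₂ n₃ : ℕ) : Set (layeredD n₁ n₂ n₃).E := {e | ∃ p, e = Sum.inr p}
variable {n₁ n₂ n₃ : ℕ}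

open Classical in
lemma F_two (J S₁ S₂ T : Set (layeredD n₁ n₂ n₃).E)
    (h : ∀ e, ((if e ∈ S₁ then (1 : ZMod 2) else 0) + (if e ∈ S₂ then 1 else 0))
      = if e ∈ T then 1 else 0) :
    F J S₁ + F J S₂ = F J T := by
  unfold F
  rw [← Finset.sum_add_distrib]
  apply Finset.sum_congr rfl
  intro e _
  by_cases he : e ∈ J
  · simpa [Set.mem_inter_iff, he] using h e
  · simp [Set.mem_inter_iff, he]

open Classical in
lemma F_three (J S₁ S₂ S₃ T : Set (layeredD n₁ n₂ n₃).E)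
    (h : ∀ e, ((if e ∈ S₁ then (1 : ZMod 2) else 0) + (if e ∈ S₂ then 1 else 0)
      + (if e ∈ S₃ then 1 else 0)) = if e ∈ T then 1 else 0) :
    F J S₁ + F J S₂ + F J S₃ = F J T := by
  unfold F
  rw [← Finset.sum_add_distrib, ← Finset.sum_add_distrib]
  apply Finset.sum_congr rfl
  intro e _
  by_cases he : e ∈ J
  · simpa [Set.mem_inter_iff, he] using h e
  · simp [Set.mem_inter_iff, he]

open Classical in
lemma F_fam {ι : Type} [Fintype ι] (J : Set (layeredD n₁ n₂ n₃).E)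
    (S : ι → Set (layeredD n₁ n₂ n₃).E) (T : Set (layeredD n₁ n₂ n₃).E)
    (h : ∀ e, (∑ i, if e ∈ S i then (1 : ZMod 2) else 0) = if e ∈ T then 1 else 0) :
    ∑ i, F J (S i) = F J T := by
  unfold F
  rw [Finset.sum_comm]
  apply Finset.sum_congr rfl
  intro e _
  by_cases he : e ∈ J
  · calc (∑ i, if e ∈ J ∩ S i then (1 : ZMod 2) else 0)
        = ∑ i, if e ∈ S i then 1 else 0 := by
          apply Finset.sum_congr rfl; intro i _; simp [Set.mem_inter_iff, he]
      _ = if e ∈ J ∩ T then 1 else 0 := by rw [h e]; simp [Set.mem_inter_iff, he]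
  · simp [Set.mem_inter_iff, he]

lemma iteS_pos {α : Type} {S : Set α} {e : α} [Decidable (e ∈ S)] (h : e ∈ S) :
    (if e ∈ S then (1 : ZMod 2) else 0) = 1 := if_pos h

lemma iteS_neg {α : Type} {S : Set α} {e : α} [Decidable (e ∈ S)] (h : e ∉ S) :
    (if e ∈ S then (1 : ZMod 2) else 0) = 0 := if_neg h

lemma mem_AB_inl {p : Fin n₁ × Fin n₂} :
    (Sum.inl p : (layeredD n₁ n₂ n₃).E) ∈ AB n₁ n₂ n₃ := ⟨p, rfl⟩

lemma notmem_AB_inr {p : Fin n₂ × Fin n₃} :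
    (Sum.inr p : (layeredD n₁ n₂ n₃).E) ∉ AB n₁ n₂ n₃ := by
  rintro ⟨q, h⟩; exact nomatch h

lemma mem_BC_inr {p : Fin n₂ × Fin n₃} :
    (Sum.inr p : (layeredD n₁ n₂ n₃).E) ∈ BC n₁ n₂ n₃ := ⟨p, rfl⟩

lemma notmem_BC_inl {p : Fin n₁ × Fin n₂} :
    (Sum.inl p : (layeredD n₁ n₂ n₃).E) ∉ BC n₁ n₂ n₃ := by
  rintro ⟨q, h⟩; exact nomatch h

lemma mem_Mt_inl {T : Set (Fin n₂)} {a : Fin n₁} {b : Fin n₂} (h : b ∉ T) :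
    (Sum.inl (a, b) : (layeredD n₁ n₂ n₃).E) ∈ Mt n₁ n₂ n₃ T := Or.inl ⟨a, b, h, rfl⟩

lemma mem_Mt_inr {T : Set (Fin n₂)} {b : Fin n₂} {c : Fin n₃} (h : b ∈ T) :
    (Sum.inr (b, c) : (layeredD n₁ n₂ n₃).E) ∈ Mt n₁ n₂ n₃ T := Or.inr ⟨b, c, h, rfl⟩

lemma sum_F_Sa (J : Set (layeredD n₁ n₂ n₃).E) :
    ∑ a : Fin n₁, F J (Sa n₁ n₂ n₃ a) = F J (AB n₁ n₂ n₃) := by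
  classical
  apply F_fam
  intro e
  rcases e with ⟨a', b⟩ | ⟨b, c⟩
  · have h1 : ∀ a : Fin n₁,
        (if (Sum.inl (a', b) : (layeredD n₁ n₂ n₃).E) ∈ Sa n₁ n₂ n₃ a then (1 : ZMod 2) else 0)
        = if a' = a then 1 else 0 := fun a => by
      by_cases h : a' = a <;> simp [mem_Sa_iff, h]
    erw [Finset.sum_congr rfl (fun a _ => h1 a), Finset.sum_ite_eq, iteS_pos mem_AB_inl,
      if_pos (Finset.mem_univ a')]
  · have h1 : ∀ a : Fin n₁,
        (if (Sum.inr (b, c) : (layeredD n₁ n₂ n₃).E) ∈ Sa n₁ n₂ n₃ a then (1 : ZMod 2) else 0)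
        = 0 := fun a => iteS_neg notmem_Sa_inr
    erw [Finset.sum_congr rfl (fun a _ => h1 a), Finset.sum_const_zero, iteS_neg notmem_AB_inr]

lemma sum_F_Sc (J : Set (layeredD n₁ n₂ n₃).E) :
    ∑ c : Fin n₃, F J (Sc n₁ n₂ n₃ c) = F J (BC n₁ n₂ n₃) := by
  classical
  apply F_fam
  intro e
  rcases e with ⟨a', b⟩ | ⟨b, c'⟩
  · have h1 : ∀ c : Fin n₃,
        (if (Sum.inl (a', b) : (layeredD n₁ n₂ n₃).E) ∈ Sc n₁ n₂ n₃ c then (1 : ZMod 2) else 0)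
        = 0 := fun c => iteS_neg notmem_Sc_inl
    erw [Finset.sum_congr rfl (fun c _ => h1 c), Finset.sum_const_zero, iteS_neg notmem_BC_inl]
  · have h1 : ∀ c : Fin n₃,
        (if (Sum.inr (b, c') : (layeredD n₁ n₂ n₃).E) ∈ Sc n₁ n₂ n₃ c then (1 : ZMod 2) else 0)
        = if c' = c then 1 else 0 := fun c => by
      by_cases h : c' = c <;> simp [mem_Sc_iff, h]
    erw [Finset.sum_congr rfl (fun c _ => h1 c), Finset.sum_ite_eq, iteS_pos mem_BC_inr,
      if_pos (Finset.mem_univ c')]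

lemma F_AB_add_F_BC (J : Set (layeredD n₁ n₂ n₃).E) :
    F J (AB n₁ n₂ n₃) + F J (BC n₁ n₂ n₃) = F J Set.univ := by
  classical
  apply F_two
  intro e
  rcases e with ⟨a', b⟩ | ⟨b, c⟩
  · erw [iteS_pos mem_AB_inl, iteS_neg notmem_BC_inl]; simp; exact Set.mem_univ _
  · erw [iteS_neg notmem_AB_inr, iteS_pos mem_BC_inr]; simp; exact Set.mem_univ _

lemma F_Mt_add_F_Mt_compl (J : Set (layeredD n₁ n₂ n₃).E) (T : Set (Fin n₂)) :
    F J (Mt n₁ n₂ n₃ T) + F J (Mt n₁ n₂ n₃ Tᶜ) = F J Set.univ := by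
  classical
  apply F_two
  intro e
  rcases e with ⟨a', b⟩ | ⟨b, c⟩
  · by_cases h : b ∈ T
    · erw [iteS_neg (notmem_Mt_inl h), iteS_pos (mem_Mt_inl (by simpa using h))]; simp; exact Set.mem_univ _
    · erw [iteS_pos (mem_Mt_inl h), iteS_neg (notmem_Mt_inl (by simpa using h))]; simp; exact Set.mem_univ _
  · by_cases h : b ∈ T
    · erw [iteS_pos (mem_Mt_inr h), iteS_neg (notmem_Mt_inr (by simpa using h))]; simp; exact Set.mem_univ _
    · erw [iteS_neg (notmem_Mt_inr h), iteS_pos (mem_Mt_inr (by simpa using h))]; simp; exact Set.mem_univ _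

lemma F_Mt_three (J : Set (layeredD n₁ n₂ n₃).E) (T₁ T₂ : Set (Fin n₂))
    (hd : Disjoint T₁ T₂) :
    F J (Mt n₁ n₂ n₃ T₁) + F J (Mt n₁ n₂ n₃ T₂) + F J (Mt n₁ n₂ n₃ (T₁ ∪ T₂))
      = F J (AB n₁ n₂ n₃) := by
  classical
  apply F_three
  intro e
  rcases e with ⟨a', b⟩ | ⟨b, c⟩
  · by_cases h1 : b ∈ T₁ <;> by_cases h2 : b ∈ T₂
    · exact absurd h2 (Set.disjoint_left.mp hd h1)
    · erw [iteS_neg (notmem_Mt_inl h1), iteS_pos (mem_Mt_inl h2),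
        iteS_neg (notmem_Mt_inl (Set.mem_union_left _ h1)), iteS_pos mem_AB_inl]; decide
    · erw [iteS_pos (mem_Mt_inl h1), iteS_neg (notmem_Mt_inl h2),
        iteS_neg (notmem_Mt_inl (Set.mem_union_right _ h2)), iteS_pos mem_AB_inl]; decide
    · erw [iteS_pos (mem_Mt_inl h1), iteS_pos (mem_Mt_inl h2),
        iteS_pos (mem_Mt_inl (by simp [h1, h2])), iteS_pos mem_AB_inl]; decide
  · by_cases h1 : b ∈ T₁ <;> by_cases h2 : b ∈ T₂
    · exact absurd h2 (Set.disjoint_left.mp hd h1)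
    · erw [iteS_pos (mem_Mt_inr h1), iteS_neg (notmem_Mt_inr h2),
        iteS_pos (mem_Mt_inr (Set.mem_union_left _ h1)), iteS_neg notmem_AB_inr]; decide
    · erw [iteS_neg (notmem_Mt_inr h1), iteS_pos (mem_Mt_inr h2),
        iteS_pos (mem_Mt_inr (Set.mem_union_right _ h2)), iteS_neg notmem_AB_inr]; decide
    · erw [iteS_neg (notmem_Mt_inr h1), iteS_neg (notmem_Mt_inr h2),
        iteS_neg (notmem_Mt_inr (by simp [h1, h2])), iteS_neg notmem_AB_inr]; decide

lemma F_Mt_three_compl (J : Set (layeredD n₁ n₂ n₃).E) (T₁ T₂ : Set (Fin n₂))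
    (hd : Disjoint T₁ T₂) :
    F J (Mt n₁ n₂ n₃ T₁ᶜ) + F J (Mt n₁ n₂ n₃ T₂ᶜ) + F J (Mt n₁ n₂ n₃ (T₁ ∪ T₂)ᶜ)
      = F J (BC n₁ n₂ n₃) := by
  classical
  apply F_three
  intro e
  rcases e with ⟨a', b⟩ | ⟨b, c⟩
  · by_cases h1 : b ∈ T₁ <;> by_cases h2 : b ∈ T₂
    · exact absurd h2 (Set.disjoint_left.mp hd h1)
    · erw [iteS_pos (mem_Mt_inl (show b ∉ T₁ᶜ by simpa using h1)),
        iteS_neg (notmem_Mt_inl (show b ∈ T₂ᶜ by simpa using h2)),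
        iteS_pos (mem_Mt_inl (show b ∉ (T₁ ∪ T₂)ᶜ by simp [h1])),
        iteS_neg notmem_BC_inl]; decide
    · erw [iteS_neg (notmem_Mt_inl (show b ∈ T₁ᶜ by simpa using h1)),
        iteS_pos (mem_Mt_inl (show b ∉ T₂ᶜ by simpa using h2)),
        iteS_pos (mem_Mt_inl (show b ∉ (T₁ ∪ T₂)ᶜ by simp [h2])),
        iteS_neg notmem_BC_inl]; decide
    · erw [iteS_neg (notmem_Mt_inl (show b ∈ T₁ᶜ by simpa using h1)),
        iteS_neg (notmem_Mt_inl (show b ∈ T₂ᶜ by simpa using h2)),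
        iteS_neg (notmem_Mt_inl (show b ∈ (T₁ ∪ T₂)ᶜ by simp [h1, h2])),
        iteS_neg notmem_BC_inl]; decide
  · by_cases h1 : b ∈ T₁ <;> by_cases h2 : b ∈ T₂
    · exact absurd h2 (Set.disjoint_left.mp hd h1)
    · erw [iteS_neg (notmem_Mt_inr (show b ∉ T₁ᶜ by simpa using h1)),
        iteS_pos (mem_Mt_inr (show b ∈ T₂ᶜ by simpa using h2)),
        iteS_neg (notmem_Mt_inr (show b ∉ (T₁ ∪ T₂)ᶜ by simp [h1])),
        iteS_pos mem_BC_inr]; decide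
    · erw [iteS_pos (mem_Mt_inr (show b ∈ T₁ᶜ by simpa using h1)),
        iteS_neg (notmem_Mt_inr (show b ∉ T₂ᶜ by simpa using h2)),
        iteS_neg (notmem_Mt_inr (show b ∉ (T₁ ∪ T₂)ᶜ by simp [h2])),
        iteS_pos mem_BC_inr]; decide
    · erw [iteS_pos (mem_Mt_inr (show b ∈ T₁ᶜ by simpa using h1)),
        iteS_pos (mem_Mt_inr (show b ∈ T₂ᶜ by simpa using h2)),
        iteS_pos (mem_Mt_inr (show b ∈ (T₁ ∪ T₂)ᶜ by simp [h1, h2])),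
        iteS_pos mem_BC_inr]; decide


lemma zmod2_zero_iff (n : ℕ) : (n : ZMod 2) = 0 ↔ n % 2 = 0 := by
  constructor
  · intro h
    rcases Nat.mod_two_eq_zero_or_one n with h0 | h0
    · exact h0
    · exfalso; rw [← ZMod.natCast_mod, h0] at h; simp at h
  · intro h; rw [← ZMod.natCast_mod, h]; simp

lemma zmod2_one_iff (n : ℕ) : (n : ZMod 2) = 1 ↔ n % 2 = 1 := by
  constructor
  · intro h
    rcases Nat.mod_two_eq_zero_or_one n with h0 | h0
    · exfalso; rw [← ZMod.natCast_mod, h0] at h; simp at h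
    · exact h0
  · intro h; rw [← ZMod.natCast_mod, h]; simp

lemma neg_two (h₁ : 1 ≤ n₁) (h₂ : 2 ≤ n₂) (h₃ : 1 ≤ n₃)
    (hD : (layeredD n₁ n₂ n₃).HasOddDijoin) : n₁ % 2 = n₃ % 2 := by
  obtain ⟨J, hJ⟩ := hD
  have h₂' : 1 ≤ n₂ := by omega
  set b0 : Fin n₂ := ⟨0, by omega⟩ with hb0
  set b1 : Fin n₂ := ⟨1, by omega⟩ with hb1
  have hne01 : b1 ≠ b0 := by simp [hb0, hb1, Fin.ext_iff]
  have ha : ∀ a, F J (Sa n₁ n₂ n₃ a) = 1 := fun a =>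
    (odd_ncard_iff J _).mp (hJ _ (isDirectedBond_Sa h₂' h₃ a))
  have hc : ∀ c, F J (Sc n₁ n₂ n₃ c) = 1 := fun c =>
    (odd_ncard_iff J _).mp (hJ _ (isDirectedBond_Sc h₁ h₂' c))
  have hb : ∀ T : Set (Fin n₂), T.Nonempty → T ≠ Set.univ → F J (Mt n₁ n₂ n₃ T) = 1 :=
    fun T hT1 hT2 => (odd_ncard_iff J _).mp (hJ _ (isDirectedBond_Mt h₁ h₃ hT1 hT2))
  have hT0 : ({b0} : Set (Fin n₂)) ≠ Set.univ := fun h =>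
    hne01 (by have := Set.eq_univ_iff_forall.mp h b1; simpa using this)
  have hTc : ({b0}ᶜ : Set (Fin n₂)) ≠ Set.univ := fun h =>
    (Set.eq_univ_iff_forall.mp h b0) rfl
  have e1 : ∑ a : Fin n₁, F J (Sa n₁ n₂ n₃ a) = (n₁ : ZMod 2) := by simp [ha]
  have e2 : ∑ c : Fin n₃, F J (Sc n₁ n₂ n₃ c) = (n₃ : ZMod 2) := by simp [hc]
  have h6 : F J Set.univ = 0 := by
    rw [← F_Mt_add_F_Mt_compl J {b0}, hb {b0} ⟨b0, rfl⟩ hT0,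
      hb {b0}ᶜ ⟨b1, hne01⟩ hTc]
    decide
  have h7 : ((n₁ : ZMod 2) + (n₃ : ZMod 2)) = 0 := by
    rw [← e1, ← e2, sum_F_Sa, sum_F_Sc, F_AB_add_F_BC, h6]
  have h8 : ((n₁ + n₃ : ℕ) : ZMod 2) = 0 := by push_cast; exact h7
  have := (zmod2_zero_iff _).mp h8
  omega

lemma neg_three (h₁ : 1 ≤ n₁) (h₂ : 3 ≤ n₂) (h₃ : 1 ≤ n₃)
    (hD : (layeredD n₁ n₂ n₃).HasOddDijoin) : n₁ % 2 = 1 ∧ n₃ % 2 = 1 := by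
  obtain ⟨J, hJ⟩ := hD
  have h₂' : 1 ≤ n₂ := by omega
  set b0 : Fin n₂ := ⟨0, by omega⟩ with hb0
  set b1 : Fin n₂ := ⟨1, by omega⟩ with hb1
  set b2 : Fin n₂ := ⟨2, by omega⟩ with hb2
  have hne01 : b0 ≠ b1 := by simp [hb0, hb1, Fin.ext_iff]
  have hne02 : b2 ≠ b0 := by simp [hb0, hb2, Fin.ext_iff]
  have hne12 : b2 ≠ b1 := by simp [hb1, hb2, Fin.ext_iff]
  have ha : ∀ a, F J (Sa n₁ n₂ n₃ a) = 1 := fun a =>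
    (odd_ncard_iff J _).mp (hJ _ (isDirectedBond_Sa h₂' h₃ a))
  have hc : ∀ c, F J (Sc n₁ n₂ n₃ c) = 1 := fun c =>
    (odd_ncard_iff J _).mp (hJ _ (isDirectedBond_Sc h₁ h₂' c))
  have hb : ∀ T : Set (Fin n₂), T.Nonempty → T ≠ Set.univ → F J (Mt n₁ n₂ n₃ T) = 1 :=
    fun T hT1 hT2 => (odd_ncard_iff J _).mp (hJ _ (isDirectedBond_Mt h₁ h₃ hT1 hT2))
  have hd : Disjoint ({b0} : Set (Fin n₂)) {b1} := by
    simp [Set.disjoint_singleton_left, hne01]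
  have e1 : ∑ a : Fin n₁, F J (Sa n₁ n₂ n₃ a) = (n₁ : ZMod 2) := by simp [ha]
  have e2 : ∑ c : Fin n₃, F J (Sc n₁ n₂ n₃ c) = (n₃ : ZMod 2) := by simp [hc]
  have hu : ∀ T : Set (Fin n₂), b2 ∉ T → T ≠ Set.univ := fun T hT h =>
    hT (h ▸ Set.mem_univ b2)
  have hAB : F J (AB n₁ n₂ n₃) = 1 := by
    rw [← F_Mt_three J {b0} {b1} hd,
      hb {b0} ⟨b0, rfl⟩ (hu _ (by simp [hne02])),
      hb {b1} ⟨b1, rfl⟩ (hu _ (by simp [hne12])),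
      hb ({b0} ∪ {b1}) ⟨b0, Or.inl rfl⟩ (hu _ (by simp [hne02, hne12]))]
    decide
  have hBC : F J (BC n₁ n₂ n₃) = 1 := by
    rw [← F_Mt_three_compl J {b0} {b1} hd,
      hb {b0}ᶜ ⟨b1, hne01.symm⟩ (fun h => (Set.eq_univ_iff_forall.mp h b0) rfl),
      hb {b1}ᶜ ⟨b0, hne01⟩ (fun h => (Set.eq_univ_iff_forall.mp h b1) rfl),
      hb ({b0} ∪ {b1})ᶜ ⟨b2, by simp [hne02, hne12]⟩
        (fun h => by have := Set.eq_univ_iff_forall.mp h b0; simp at this)]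
    decide
  constructor
  · apply (zmod2_one_iff _).mp; rw [← e1, sum_F_Sa, hAB]
  · apply (zmod2_one_iff _).mp; rw [← e2, sum_F_Sc, hBC]


lemma ncard_range {α β : Type} (f : α → β) (hf : Function.Injective f) :
    (Set.range f).ncard = Nat.card α := by
  rw [← Nat.card_coe_set_eq, Nat.card_range_of_injective hf]

lemma inj_inl (b : Fin n₂) :
    Function.Injective (fun a : Fin n₁ => (Sum.inl (a, b) : (layeredD n₁ n₂ n₃).E)) := by
  intro x y h
  injection h with h'
  injection h' with h1 h2
  all_goals exact h1

lemma inj_inr (b : Fin n₂) :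
    Function.Injective (fun c : Fin n₃ => (Sum.inr (b, c) : (layeredD n₁ n₂ n₃).E)) := by
  intro x y h
  injection h with h'
  injection h' with h1 h2
  all_goals exact h2

lemma inj_inl' (a : Fin n₁) :
    Function.Injective (fun b : Fin n₂ => (Sum.inl (a, b) : (layeredD n₁ n₂ n₃).E)) := by
  intro x y h
  injection h with h'
  injection h' with h1 h2
  all_goals exact h2

lemma inj_inr' (c : Fin n₃) :
    Function.Injective (fun b : Fin n₂ => (Sum.inr (b, c) : (layeredD n₁ n₂ n₃).E)) := by
  intro x y h
  injection h with h'
  injection h' with h1 h2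
  all_goals exact h1

/-- `𝒟(n₁,1,n₃)` has an odd dijoin, namely the set of all edges. -/
lemma pos_one (h₁ : 1 ≤ n₁) (h₃ : 1 ≤ n₃) : (layeredD n₁ 1 n₃).HasOddDijoin := by
  refine ⟨Set.univ, ?_⟩
  intro S hS
  rcases classify h₁ le_rfl h₃ hS with ⟨a, rfl⟩ | ⟨c, rfl⟩ | ⟨T, hT1, hT2, rfl⟩
  · have : Sa n₁ 1 n₃ a = Set.range (fun b : Fin 1 => (Sum.inl (a, b) : (layeredD n₁ 1 n₃).E)) := by
      ext e; exact ⟨fun ⟨b, h⟩ => ⟨b, h.symm⟩, fun ⟨b, h⟩ => ⟨b, h.symm⟩⟩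
    erw [Set.univ_inter, this, ncard_range _ (inj_inl' a)]
    simp
  · have : Sc n₁ 1 n₃ c = Set.range (fun b : Fin 1 => (Sum.inr (b, c) : (layeredD n₁ 1 n₃).E)) := by
      ext e; exact ⟨fun ⟨b, h⟩ => ⟨b, h.symm⟩, fun ⟨b, h⟩ => ⟨b, h.symm⟩⟩
    erw [Set.univ_inter, this, ncard_range _ (inj_inr' c)]
    simp
  · exfalso
    obtain ⟨b, hbT⟩ := hT1
    exact hT2 (Set.eq_univ_of_forall fun x => (Subsingleton.elim x b) ▸ hbT)

/-- If `n₁` and `n₃` are odd, the star at a fixed middle vertex is an odd dijoin. -/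
lemma pos_odd (hp1 : n₁ % 2 = 1) (h₂ : 1 ≤ n₂) (hp3 : n₃ % 2 = 1) :
    (layeredD n₁ n₂ n₃).HasOddDijoin := by
  have h₁ : 1 ≤ n₁ := by omega
  have h₃ : 1 ≤ n₃ := by omega
  set b₀ : Fin n₂ := ⟨0, h₂⟩ with hb₀
  set J : Set (layeredD n₁ n₂ n₃).E :=
    {e | (∃ a, e = Sum.inl (a, b₀)) ∨ (∃ c, e = Sum.inr (b₀, c))} with hJdef
  refine ⟨J, ?_⟩
  intro S hS
  rcases classify h₁ h₂ h₃ hS with ⟨a, rfl⟩ | ⟨c, rfl⟩ | ⟨T, hT1, hT2, rfl⟩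
  · have : J ∩ Sa n₁ n₂ n₃ a = {Sum.inl (a, b₀)} := by
      ext e
      constructor
      · rintro ⟨hJ, b, rfl⟩
        rcases hJ with ⟨a', he⟩ | ⟨c', he⟩
        · injection he with h'; injection h' with ha hb
          rw [hb]; rfl
        · exact nomatch he
      · rintro rfl
        exact ⟨Or.inl ⟨a, rfl⟩, ⟨b₀, rfl⟩⟩
    erw [this, Set.ncard_singleton]
    exact odd_one
  · have : J ∩ Sc n₁ n₂ n₃ c = {Sum.inr (b₀, c)} := by
      ext e
      constructor
      · rintro ⟨hJ, b, rfl⟩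
        rcases hJ with ⟨a', he⟩ | ⟨c', he⟩
        · exact nomatch he
        · injection he with h'; injection h' with hb hc
          rw [hb]; rfl
      · rintro rfl
        exact ⟨Or.inr ⟨c, rfl⟩, ⟨b₀, rfl⟩⟩
    erw [this, Set.ncard_singleton]
    exact odd_one
  · by_cases hb : b₀ ∈ T
    · have : J ∩ Mt n₁ n₂ n₃ T =
          Set.range (fun c : Fin n₃ => (Sum.inr (b₀, c) : (layeredD n₁ n₂ n₃).E)) := by
        ext e
        constructor
        · rintro ⟨hJ, hM⟩
          rcases hJ with ⟨a', rfl⟩ | ⟨c', rfl⟩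
          · exact absurd hb (mem_Mt_inl_iff.mp hM)
          · exact ⟨c', rfl⟩
        · rintro ⟨c', rfl⟩
          exact ⟨Or.inr ⟨c', rfl⟩, mem_Mt_inr hb⟩
      erw [this, ncard_range _ (inj_inr b₀), Nat.card_eq_fintype_card, Fintype.card_fin,
        Nat.odd_iff]
      exact hp3
    · have : J ∩ Mt n₁ n₂ n₃ T =
          Set.range (fun a : Fin n₁ => (Sum.inl (a, b₀) : (layeredD n₁ n₂ n₃).E)) := by
        ext e
        constructor
        · rintro ⟨hJ, hM⟩
          rcases hJ with ⟨a', rfl⟩ | ⟨c', rfl⟩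
          · exact ⟨a', rfl⟩
          · exact absurd (mem_Mt_inr_iff.mp hM) hb
        · rintro ⟨a', rfl⟩
          exact ⟨Or.inl ⟨a', rfl⟩, mem_Mt_inl hb⟩
      erw [this, ncard_range _ (inj_inl b₀), Nat.card_eq_fintype_card, Fintype.card_fin,
        Nat.odd_iff]
      exact hp1


lemma subset_fin2 (T : Set (Fin 2)) (h1 : T.Nonempty) (h2 : T ≠ Set.univ) :
    T = {0} ∨ T = {1} := by
  have hx : ∀ x : Fin 2, x = 0 ∨ x = 1 := by decide
  by_cases h0 : (0 : Fin 2) ∈ T <;> by_cases h1' : (1 : Fin 2) ∈ T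
  · exact absurd (Set.eq_univ_of_forall fun x => by rcases hx x with rfl | rfl <;> assumption) h2
  · left; ext x
    rcases hx x with rfl | rfl <;> simp [h0, h1', Fin.ext_iff]
  · right; ext x
    rcases hx x with rfl | rfl <;> simp [h0, h1', Fin.ext_iff]
  · obtain ⟨x, hx'⟩ := h1
    rcases hx x with rfl | rfl <;> [exact absurd hx' h0; exact absurd hx' h1']

lemma pos_even2 (h₁ : 1 ≤ n₁) (hp1 : n₁ % 2 = 0) (h₃ : 1 ≤ n₃) (hp3 : n₃ % 2 = 0) :
    (layeredD n₁ 2 n₃).HasOddDijoin := by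
  set a₀ : Fin n₁ := ⟨0, h₁⟩ with ha₀
  have h10 : (1 : Fin 2) ∉ ({0} : Set (Fin 2)) := by norm_num [Fin.ext_iff]
  have h01 : (0 : Fin 2) ∉ ({1} : Set (Fin 2)) := by norm_num [Fin.ext_iff]
  set J : Set (layeredD n₁ 2 n₃).E :=
    {e | (∃ a, a ≠ a₀ ∧ e = Sum.inl (a, 0)) ∨ e = Sum.inl (a₀, 1) ∨
      ∃ c, e = Sum.inr (1, c)} with hJdef
  refine ⟨J, ?_⟩
  intro S hS
  rcases classify h₁ (by norm_num) h₃ hS with ⟨a, rfl⟩ | ⟨c, rfl⟩ | ⟨T, hT1, hT2, rfl⟩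
  · by_cases haa : a = a₀
    · rw [haa]
      have : J ∩ Sa n₁ 2 n₃ a₀ = {Sum.inl (a₀, 1)} := by
        ext e
        constructor
        · rintro ⟨hJ, b, rfl⟩
          rcases hJ with ⟨a', ha', he⟩ | he | ⟨c', he⟩
          · injection he with h'; injection h' with hh1 hh2
            exact absurd hh1.symm ha'
          · rw [he]; rfl
          · exact nomatch he
        · rintro rfl
          exact ⟨Or.inr (Or.inl rfl), ⟨1, rfl⟩⟩
      erw [this, Set.ncard_singleton]; exact odd_one
    · have : J ∩ Sa n₁ 2 n₃ a = {Sum.inl (a, 0)} := by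
        ext e
        constructor
        · rintro ⟨hJ, b, rfl⟩
          rcases hJ with ⟨a', ha', he⟩ | he | ⟨c', he⟩
          · injection he with h'; injection h' with hh1 hh2
            rw [hh2]; rfl
          · injection he with h'; injection h' with hh1 hh2
            exact absurd hh1 haa
          · exact nomatch he
        · rintro rfl
          exact ⟨Or.inl ⟨a, haa, rfl⟩, ⟨0, rfl⟩⟩
      erw [this, Set.ncard_singleton]; exact odd_one
  · have : J ∩ Sc n₁ 2 n₃ c = {Sum.inr (1, c)} := by
      ext e
      constructor
      · rintro ⟨hJ, b, rfl⟩
        rcases hJ with ⟨a', ha', he⟩ | he | ⟨c', he⟩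
        · exact nomatch he
        · exact nomatch he
        · injection he with h'; injection h' with hh1 hh2
          rw [hh1]; rfl
      · rintro rfl
        exact ⟨Or.inr (Or.inr ⟨c, rfl⟩), ⟨1, rfl⟩⟩
    erw [this, Set.ncard_singleton]; exact odd_one
  · rcases subset_fin2 T hT1 hT2 with rfl | rfl
    · have : J ∩ Mt n₁ 2 n₃ {0} = {Sum.inl (a₀, 1)} := by
        ext e
        constructor
        · rintro ⟨hJ, hM⟩
          rcases hJ with ⟨a', ha', rfl⟩ | rfl | ⟨c', rfl⟩
          · exact absurd rfl ((mem_Mt_inl_iff (T := {0})).mp hM)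
          · rfl
          · exact absurd ((mem_Mt_inr_iff (T := {0})).mp hM) h10
        · rintro rfl
          exact ⟨Or.inr (Or.inl rfl), mem_Mt_inl h10⟩
      erw [this, Set.ncard_singleton]; exact odd_one
    · have heq : J ∩ Mt n₁ 2 n₃ {1} =
          ((fun a : Fin n₁ => (Sum.inl (a, 0) : (layeredD n₁ 2 n₃).E)) '' {a | a ≠ a₀}) ∪
          Set.range (fun c : Fin n₃ => (Sum.inr (1, c) : (layeredD n₁ 2 n₃).E)) := by
        ext e
        constructor
        · rintro ⟨hJ, hM⟩
          rcases hJ with ⟨a', ha', rfl⟩ | rfl | ⟨c', rfl⟩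
          · exact Or.inl ⟨a', ha', rfl⟩
          · exact absurd rfl ((mem_Mt_inl_iff (T := {1})).mp hM)
          · exact Or.inr ⟨c', rfl⟩
        · rintro (⟨a', ha', rfl⟩ | ⟨c', rfl⟩)
          · exact ⟨Or.inl ⟨a', ha', rfl⟩, mem_Mt_inl h01⟩
          · exact ⟨Or.inr (Or.inr ⟨c', rfl⟩), mem_Mt_inr rfl⟩
      have hdis : Disjoint
          ((fun a : Fin n₁ => (Sum.inl (a, 0) : (layeredD n₁ 2 n₃).E)) '' {a | a ≠ a₀})
          (Set.range (fun c : Fin n₃ => (Sum.inr (1, c) : (layeredD n₁ 2 n₃).E))) := by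
        rw [Set.disjoint_left]
        rintro e ⟨a', ha', rfl⟩ ⟨c', he⟩
        exact nomatch he
      have hc1 : ((fun a : Fin n₁ => (Sum.inl (a, 0) : (layeredD n₁ 2 n₃).E)) ''
          {a | a ≠ a₀}).ncard = n₁ - 1 := by
        rw [Set.ncard_image_of_injective _ (inj_inl 0)]
        have hcompl := Set.ncard_add_ncard_compl ({a₀} : Set (Fin n₁))
        rw [Set.ncard_singleton, Nat.card_eq_fintype_card, Fintype.card_fin] at hcompl
        have heq2 : ({a₀} : Set (Fin n₁))ᶜ = {a | a ≠ a₀} := rfl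
        rw [← heq2]
        omega
      have hc2 : (Set.range (fun c : Fin n₃ =>
          (Sum.inr (1, c) : (layeredD n₁ 2 n₃).E))).ncard = n₃ := by
        rw [ncard_range _ (inj_inr 1), Nat.card_eq_fintype_card, Fintype.card_fin]
      erw [heq, Set.ncard_union_eq hdis (Set.toFinite _) (Set.toFinite _), hc1, hc2,
        Nat.odd_iff]
      omega

end Layered2
end Stmt17

-- STATEMENT 17
theorem stmt17 (n₁ n₂ n₃ : ℕ) (h₁ : 1 ≤ n₁) (h₂ : 1 ≤ n₂) (h₃ : 1 ≤ n₃) :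
    (layeredD n₁ n₂ n₃).HasOddDijoin ↔
      (n₂ = 1 ∨ (n₂ = 2 ∧ n₁ % 2 = n₃ % 2) ∨ (3 ≤ n₂ ∧ n₁ % 2 = 1 ∧ n₃ % 2 = 1)) := by
  constructor
  · intro hD
    by_contra hcon
    push_neg at hcon
    obtain ⟨hn1, hn2, hn3⟩ := hcon
    rcases Nat.lt_or_ge n₂ 3 with h | h
    · have h2eq : n₂ = 2 := by omega
      subst h2eq
      exact (hn2 rfl) (Stmt17.neg_two h₁ (by omega) h₃ hD)
    · obtain ⟨o1, o3⟩ := Stmt17.neg_three h₁ h h₃ hD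
      exact (hn3 h o1) o3
  · rintro (h | ⟨h, hp⟩ | ⟨h, hp1, hp3⟩)
    · subst h; exact Stmt17.pos_one h₁ h₃
    · subst h
      rcases Nat.mod_two_eq_zero_or_one n₁ with h0 | h0
      · exact Stmt17.pos_even2 h₁ h0 h₃ (by omega)
      · exact Stmt17.pos_odd h0 (by omega) (by omega)
    · exact Stmt17.pos_odd hp1 h₂ hp3
end

section
/- Every odd diamond and every odd one-direction is a minimal obstruction, i.e., it has no odd dijoin but every proper cut minor of it has an odd dijoin. -/
open Relation

/-! ## Auxiliary lemmas for Statement 18 -/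

attribute [reducible] oneDirK diamondD layeredD MultiDigraph.contract MultiDigraph.deleteEdge MultiDigraph.deleteVertex

section ObstAux

open MultiDigraph

lemma nat_odd_iff_cast2 (n : ℕ) : Odd n ↔ ((n : ZMod 2) = 1) := by
  rw [Nat.odd_iff]
  constructor
  · intro h; rw [← ZMod.natCast_mod n 2, h]; norm_num
  · intro h
    rcases Nat.mod_two_eq_zero_or_one n with h2 | h2
    · rw [← ZMod.natCast_mod n 2, h2] at h; simp at h
    · exact h2

lemma nat_even_iff_cast2 (n : ℕ) : Even n ↔ ((n : ZMod 2) = 0) := by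
  rw [Nat.even_iff]
  constructor
  · intro h; rw [← ZMod.natCast_mod n 2, h]; norm_num
  · intro h
    rcases Nat.mod_two_eq_zero_or_one n with h2 | h2
    · exact h2
    · rw [← ZMod.natCast_mod n 2, h2] at h; simp at h

lemma mem_cutAt_iff (D : MultiDigraph) (X : Set D.V) (e : D.E) :
    e ∈ D.cutAt X ↔ ¬(D.tail e ∈ X ↔ D.head e ∈ X) := by
  simp only [MultiDigraph.cutAt, Set.mem_setOf_eq]; tauto

lemma cutAt_compl (D : MultiDigraph) (X : Set D.V) : D.cutAt Xᶜ = D.cutAt X := by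
  ext e; simp only [MultiDigraph.cutAt, Set.mem_setOf_eq, Set.mem_compl_iff]; tauto

lemma ncard_cast_sum {α : Type} [Fintype α] [DecidableEq α] (s : Set α) :
    ((s.ncard : ZMod 2)) = ∑ e : α, s.indicator (fun _ => (1 : ZMod 2)) e := by
  classical
  have h1 : s.toFinset = Finset.univ.filter (· ∈ s) := by
    ext x; simp
  have h2 : ∀ e : α, s.indicator (fun _ => (1 : ZMod 2)) e = if e ∈ s then (1 : ZMod 2) else 0 :=
    fun e => Set.indicator_apply s _ e
  rw [Finset.sum_congr rfl (fun e _ => h2 e), Set.ncard_eq_toFinset_card', h1,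
    Finset.card_filter]
  push_cast
  rfl

lemma no_oddDijoin_of_cover (D : MultiDigraph) {ι : Type} [Fintype ι] [DecidableEq ι]
    (F : ι → Set D.E) (hbond : ∀ i, D.IsDirectedBond (F i))
    (hcov : ∀ e : D.E, Even {i | e ∈ F i}.ncard)
    (hodd : Odd (Fintype.card ι)) : ¬ D.HasOddDijoin := by
  classical
  rintro ⟨J, hJ⟩
  have h1 : ∀ i, ((J ∩ F i).ncard : ZMod 2) = 1 := fun i =>
    (nat_odd_iff_cast2 _).mp (hJ (F i) (hbond i))
  have hL : (∑ i : ι, ((J ∩ F i).ncard : ZMod 2)) = 1 := by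
    rw [Finset.sum_congr rfl (fun i _ => h1 i)]
    simpa using (nat_odd_iff_cast2 _).mp hodd
  have key : ∀ i : ι, ((J ∩ F i).ncard : ZMod 2)
      = ∑ e : D.E, (J.indicator (fun _ => (1 : ZMod 2)) e) * ((F i).indicator (fun _ => (1 : ZMod 2)) e) := by
    intro i
    rw [ncard_cast_sum]
    refine Finset.sum_congr rfl fun e _ => ?_
    by_cases hJe : e ∈ J <;> by_cases hFe : e ∈ F i <;>
      simp [hJe, hFe, Set.indicator_of_mem, Set.indicator_of_notMem, Set.mem_inter_iff]
  have hswap : (∑ i : ι, ((J ∩ F i).ncard : ZMod 2))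
      = ∑ e : D.E, (J.indicator (fun _ => (1 : ZMod 2)) e) * (∑ i : ι, (F i).indicator (fun _ => (1 : ZMod 2)) e) := by
    rw [Finset.sum_congr rfl (fun i _ => key i), Finset.sum_comm]
    refine Finset.sum_congr rfl fun e _ => ?_
    rw [Finset.mul_sum]
  have hz : ∀ e : D.E, (∑ i : ι, (F i).indicator (fun _ => (1 : ZMod 2)) e) = 0 := by
    intro e
    have : ∀ i : ι, (F i).indicator (fun _ => (1 : ZMod 2)) e
        = ({i : ι | e ∈ F i}).indicator (fun _ => (1 : ZMod 2)) i := by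
      intro i
      by_cases hFe : e ∈ F i <;>
        simp [hFe, Set.indicator_of_mem, Set.indicator_of_notMem]
    rw [Finset.sum_congr rfl (fun i _ => this i), ← ncard_cast_sum]
    exact (nat_even_iff_cast2 _).mp (hcov e)
  rw [hswap] at hL
  have : (∑ e : D.E, (J.indicator (fun _ => (1 : ZMod 2)) e) * (∑ i : ι, (F i).indicator (fun _ => (1 : ZMod 2)) e)) = 0 := by
    refine Finset.sum_eq_zero fun e _ => ?_
    rw [hz e]; simp
  rw [this] at hL
  exact one_ne_zero hL.symm

lemma walk_closed {α : Type} {r : α → α → Prop} {P : Set α}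
    (hP : ∀ a b, r a b → a ∈ P → b ∈ P) {a b : α} (h : Relation.ReflTransGen r a b)
    (ha : a ∈ P) : b ∈ P := by
  induction h with
  | refl => exact ha
  | tail _ hstep ih => exact hP _ _ hstep ih

lemma walk_stays_out (D : MultiDigraph) (e : D.E) {X : Set D.V}
    (hX : ∀ f : D.E, f ≠ e → ¬(D.tail f ∉ X ∧ D.head f ∈ X)) {x y : D.V}
    (h : Relation.ReflTransGen (D.dstepAvoiding e) x y) (hx : x ∉ X) : y ∉ X := by
  refine walk_closed (P := Xᶜ) ?_ h hx
  rintro a b ⟨f, hfe, hft, hfh⟩ ha hb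
  exact hX f hfe ⟨hft ▸ ha, hfh ▸ hb⟩

lemma eqvGen_pres {α : Type} {r : α → α → Prop} {P : Set α}
    (hP : ∀ a b, r a b → (a ∈ P ↔ b ∈ P)) {a b : α} (h : EqvGen r a b) :
    (a ∈ P ↔ b ∈ P) := by
  induction h with
  | rel a b hr => exact hP a b hr
  | refl => exact Iff.rfl
  | symm _ _ _ ih => exact ih.symm
  | trans _ _ _ _ _ ih1 ih2 => exact ih1.trans ih2

lemma walk_crossing (D : MultiDigraph) (e : D.E) {u v : D.V}
    (h : Relation.ReflTransGen (D.dstepAvoiding e) u v) :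
    ∃ L : Set D.E, e ∉ L ∧ ∀ X : Set D.V,
      (∀ f : D.E, ¬(D.tail f ∉ X ∧ D.head f ∈ X)) →
      ((u ∈ X → v ∈ X → L ∩ D.cutAt X = ∅) ∧
       (u ∉ X → L ∩ D.cutAt X = ∅) ∧
       (u ∈ X → v ∉ X → ∃ f₀, L ∩ D.cutAt X = {f₀})) := by
  induction h using Relation.ReflTransGen.head_induction_on with
  | refl =>
    refine ⟨∅, by simp, fun X hX => ⟨fun _ _ => by simp, fun _ => by simp,
      fun h1 h2 => absurd h1 h2⟩⟩
  | @head a c hstep hrest ih =>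
    obtain ⟨L, heL, hL⟩ := ih
    obtain ⟨g, hge, hgt, hgh⟩ := hstep
    refine ⟨L ∪ {g}, by simp [heL, Ne.symm hge], fun X hX => ?_⟩
    obtain ⟨h1, h2, h3⟩ := hL X hX
    have hdist : (L ∪ {g}) ∩ D.cutAt X = (L ∩ D.cutAt X) ∪ ({g} ∩ D.cutAt X) :=
      Set.union_inter_distrib_right _ _ _
    refine ⟨?_, ?_, ?_⟩
    · intro ha hv
      have hc : c ∈ X := by
        by_contra hc
        exact walk_stays_out D e (fun f _ => hX f) hrest hc hv
      have hg1 : g ∉ D.cutAt X := by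
        rw [mem_cutAt_iff, hgt, hgh]; simp [ha, hc]
      rw [hdist, h1 hc hv, Set.singleton_inter_eq_empty.mpr hg1]
      simp
    · intro ha
      have hc : c ∉ X := fun hc => hX g ⟨hgt ▸ ha, hgh ▸ hc⟩
      have hg1 : g ∉ D.cutAt X := by
        rw [mem_cutAt_iff, hgt, hgh]; simp [ha, hc]
      rw [hdist, h2 hc, Set.singleton_inter_eq_empty.mpr hg1]
      simp
    · intro ha hv
      by_cases hc : c ∈ X
      · have hg1 : g ∉ D.cutAt X := by
          rw [mem_cutAt_iff, hgt, hgh]; simp [ha, hc]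
        obtain ⟨f₀, hf₀⟩ := h3 hc hv
        refine ⟨f₀, ?_⟩
        rw [hdist, hf₀, Set.singleton_inter_eq_empty.mpr hg1]
        simp
      · have hg1 : g ∈ D.cutAt X := by
          rw [mem_cutAt_iff, hgt, hgh]; simp [ha, hc]
        refine ⟨g, ?_⟩
        rw [hdist, h2 hc, Set.empty_union,
          Set.inter_eq_left.mpr (Set.singleton_subset_iff.mpr hg1)]

end ObstAux


section ObstIso

open MultiDigraph

variable {D₁ D₂ : MultiDigraph}

/-- Identity digraph isomorphism. -/
def digraphIsoRefl (D : MultiDigraph) : DigraphIso D D :=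
  ⟨Equiv.refl _, Equiv.refl _, fun _ => rfl, fun _ => rfl⟩

/-- Inverse of a digraph isomorphism. -/
def digraphIsoSymm (φ : DigraphIso D₁ D₂) : DigraphIso D₂ D₁ where
  vmap := φ.vmap.symm
  emap := φ.emap.symm
  tail_eq := fun e => by
    have h := φ.tail_eq (φ.emap.symm e)
    rw [Equiv.apply_symm_apply] at h
    rw [Equiv.eq_symm_apply]
    exact h.symm
  head_eq := fun e => by
    have h := φ.head_eq (φ.emap.symm e)
    rw [Equiv.apply_symm_apply] at h
    rw [Equiv.eq_symm_apply]
    exact h.symm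

lemma iso_cutAt_image (φ : DigraphIso D₁ D₂) (X : Set D₁.V) :
    D₂.cutAt (φ.vmap '' X) = φ.emap '' (D₁.cutAt X) := by
  ext e2
  obtain ⟨f, rfl⟩ := φ.emap.surjective e2
  rw [φ.emap.injective.mem_set_image, mem_cutAt_iff, mem_cutAt_iff, φ.tail_eq, φ.head_eq,
    φ.vmap.injective.mem_set_image, φ.vmap.injective.mem_set_image]

lemma iso_isCut_image (φ : DigraphIso D₁ D₂) {S : Set D₁.E} (h : D₁.IsCut S) :
    D₂.IsCut (φ.emap '' S) := by
  obtain ⟨hne, X, rfl⟩ := h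
  exact ⟨hne.image _, φ.vmap '' X, (iso_cutAt_image φ X).symm⟩

lemma iso_image_symm_image (φ : DigraphIso D₁ D₂) (T : Set D₂.E) :
    φ.emap '' (φ.emap.symm '' T) = T := by
  rw [← Equiv.symm_symm φ.emap]
  exact Equiv.symm_image_image φ.emap.symm T

lemma iso_isBond_image (φ : DigraphIso D₁ D₂) {S : Set D₁.E} (h : D₁.IsBond S) :
    D₂.IsBond (φ.emap '' S) := by
  obtain ⟨hc, hmin⟩ := h
  refine ⟨iso_isCut_image φ hc, fun T hT hTS => ?_⟩
  have h1 : D₁.IsCut (φ.emap.symm '' T) := by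
    have := iso_isCut_image (digraphIsoSymm φ) hT
    exact this
  have h2 : φ.emap.symm '' T ⊆ S := by
    intro x hx
    obtain ⟨t, ht, rfl⟩ := hx
    obtain ⟨s, hs, hst⟩ := hTS ht
    rw [← hst, Equiv.symm_apply_apply]
    exact hs
  have := hmin _ h1 h2
  rw [← iso_image_symm_image φ T, this]

lemma iso_isDirectedBond_image (φ : DigraphIso D₁ D₂) {S : Set D₁.E}
    (h : D₁.IsDirectedBond S) : D₂.IsDirectedBond (φ.emap '' S) := by
  obtain ⟨hb, hne, X, rfl, hdir⟩ := h
  refine ⟨iso_isBond_image φ hb, hne.image _, φ.vmap '' X, (iso_cutAt_image φ X).symm, ?_⟩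
  intro e2
  obtain ⟨f, rfl⟩ := φ.emap.surjective e2
  rw [φ.tail_eq, φ.head_eq, φ.vmap.injective.mem_set_image, φ.vmap.injective.mem_set_image]
  exact hdir f

lemma iso_ncard_inter (φ : DigraphIso D₁ D₂) (J S : Set D₁.E) :
    ((φ.emap '' J) ∩ (φ.emap '' S)).ncard = (J ∩ S).ncard := by
  rw [← Set.image_inter φ.emap.injective, Set.ncard_image_of_injective _ φ.emap.injective]

lemma iso_hasOddDijoin (φ : DigraphIso D₁ D₂) (h : D₁.HasOddDijoin) : D₂.HasOddDijoin := by
  obtain ⟨J, hJ⟩ := h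
  refine ⟨φ.emap '' J, fun S hS => ?_⟩
  have hS1 : D₁.IsDirectedBond (φ.emap.symm '' S) :=
    iso_isDirectedBond_image (digraphIsoSymm φ) hS
  have hodd := hJ _ hS1
  have : ((φ.emap '' J) ∩ S).ncard = (J ∩ (φ.emap.symm '' S)).ncard := by
    conv_lhs => rw [← iso_image_symm_image φ S]
    exact iso_ncard_inter φ J _
  rw [this]
  exact hodd

lemma iso_avoid_dijoin (φ : DigraphIso D₁ D₂) (e : D₁.E)
    (h : ∃ J : Set D₂.E, ∀ S : Set D₂.E, D₂.IsDirectedBond S → φ.emap e ∉ S →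
      Odd (J ∩ S).ncard) :
    ∃ J : Set D₁.E, ∀ S : Set D₁.E, D₁.IsDirectedBond S → e ∉ S → Odd (J ∩ S).ncard := by
  obtain ⟨J, hJ⟩ := h
  refine ⟨φ.emap.symm '' J, fun S hS heS => ?_⟩
  have hodd := hJ (φ.emap '' S) (iso_isDirectedBond_image φ hS)
    (fun hc => heS (φ.emap.injective.mem_set_image.mp hc))
  have : ((φ.emap.symm '' J) ∩ S).ncard = (J ∩ (φ.emap '' S)).ncard := by
    rw [← iso_ncard_inter φ _ S, iso_image_symm_image φ J]
  rw [this]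
  exact hodd

lemma iso_deletable (φ : DigraphIso D₁ D₂) {e : D₁.E} (h : D₁.Deletable e) :
    D₂.Deletable (φ.emap e) := by
  obtain ⟨hne, hpath⟩ := h
  constructor
  · rw [φ.tail_eq, φ.head_eq]
    exact fun hh => hne (φ.vmap.injective hh)
  · rw [φ.tail_eq, φ.head_eq]
    refine Relation.ReflTransGen.lift φ.vmap ?_ _ _ hpath
    rintro a b ⟨g, hge, rfl, rfl⟩
    exact ⟨φ.emap g, fun hc => hge (φ.emap.injective hc), φ.tail_eq g, φ.head_eq g⟩

lemma iso_isolated (φ : DigraphIso D₁ D₂) {v : D₁.V} (h : D₁.Isolated v) :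
    D₂.Isolated (φ.vmap v) := by
  intro e2
  obtain ⟨f, rfl⟩ := φ.emap.surjective e2
  rw [φ.tail_eq, φ.head_eq]
  exact ⟨fun hh => (h f).1 (φ.vmap.injective hh), fun hh => (h f).2 (φ.vmap.injective hh)⟩

end ObstIso


section ObstClosureVC

open MultiDigraph

variable {D : MultiDigraph}

/-! ### Deleting an isolated vertex -/

lemma deleteVertex_mem_image {v : D.V} (X : Set {u : D.V // u ≠ v}) (u : D.V) (hu : u ≠ v) :
    u ∈ Subtype.val '' X ↔ (⟨u, hu⟩ : {u : D.V // u ≠ v}) ∈ X := by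
  constructor
  · rintro ⟨⟨w, hw⟩, hwX, rfl⟩
    exact hwX
  · intro h
    exact ⟨⟨u, hu⟩, h, rfl⟩

lemma deleteVertex_cutAt (v : D.V) (h : D.Isolated v) (X : Set {u : D.V // u ≠ v}) :
    (D.deleteVertex v h).cutAt X = D.cutAt (Subtype.val '' X) := by
  ext f
  rw [mem_cutAt_iff, mem_cutAt_iff]
  show ¬((⟨D.tail f, (h f).1⟩ : {u : D.V // u ≠ v}) ∈ X ↔
      (⟨D.head f, (h f).2⟩ : {u : D.V // u ≠ v}) ∈ X) ↔ _
  rw [← deleteVertex_mem_image X _ (h f).1, ← deleteVertex_mem_image X _ (h f).2]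

lemma deleteVertex_cutAt' (v : D.V) (h : D.Isolated v) (Z : Set D.V) :
    (D.deleteVertex v h).cutAt {u : {u : D.V // u ≠ v} | u.1 ∈ Z} = D.cutAt Z := by
  ext f
  rw [mem_cutAt_iff, mem_cutAt_iff]
  exact Iff.rfl

lemma deleteVertex_hasOddDijoin (v : D.V) (h : D.Isolated v) (hD : D.HasOddDijoin) :
    (D.deleteVertex v h).HasOddDijoin := by
  obtain ⟨J, hJ⟩ := hD
  refine ⟨J, fun S hS => ?_⟩
  apply hJ
  obtain ⟨⟨hcut, hmin⟩, hne, X, hSeq, hdir⟩ := hS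
  have hSeq2 : S = D.cutAt (Subtype.val '' X) := by
    rw [hSeq, deleteVertex_cutAt]
  constructor
  · refine ⟨⟨hne, Subtype.val '' X, hSeq2⟩, ?_⟩
    intro T hT hTS
    obtain ⟨hTne, Z, rfl⟩ := hT
    refine hmin _ ⟨hTne, {u : {u : D.V // u ≠ v} | u.1 ∈ Z}, (deleteVertex_cutAt' v h Z).symm⟩ hTS
  · refine ⟨hne, Subtype.val '' X, hSeq2, ?_⟩
    intro f hf
    refine hdir f ⟨?_, ?_⟩
    · intro hc
      exact hf.1 ((deleteVertex_mem_image X _ (h f).1).mpr hc)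
    · exact (deleteVertex_mem_image X _ (h f).2).mp hf.2

/-! ### Contracting an edge -/

lemma touch_eqvGen_cases (e : D.E) {a b : D.V} (hgen : EqvGen (D.touchRel {e}) a b) :
    (a = b ∨ (a = D.tail e ∧ b = D.head e) ∨ (a = D.head e ∧ b = D.tail e)) := by
  induction hgen with
    | rel x y hr =>
      obtain ⟨f, hf, hft, hfh⟩ := hr
      rw [Set.mem_singleton_iff] at hf
      subst hf
      exact Or.inr (Or.inl ⟨hft.symm, hfh.symm⟩)
    | refl x => exact Or.inl rfl
    | symm x y _ ih =>
      rcases ih with rfl | ⟨rfl, rfl⟩ | ⟨rfl, rfl⟩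
      · exact Or.inl rfl
      · exact Or.inr (Or.inr ⟨rfl, rfl⟩)
      · exact Or.inr (Or.inl ⟨rfl, rfl⟩)
    | trans x y z _ _ ih1 ih2 =>
      rcases ih1 with h1 | ⟨h1a, h1b⟩ | ⟨h1a, h1b⟩ <;>
        rcases ih2 with h2 | ⟨h2a, h2b⟩ | ⟨h2a, h2b⟩ <;> subst_vars <;> simp_all

lemma contract_mk_eq_iff (e : D.E) (a b : D.V) :
    Quotient.mk (EqvGen.setoid (D.touchRel {e})) a
      = Quotient.mk (EqvGen.setoid (D.touchRel {e})) b ↔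
    (a = b ∨ (a = D.tail e ∧ b = D.head e) ∨ (a = D.head e ∧ b = D.tail e)) := by
  constructor
  · intro hq
    exact touch_eqvGen_cases e (Quotient.exact hq)
  · intro hr
    apply Quotient.sound
    rcases hr with rfl | ⟨rfl, rfl⟩ | ⟨rfl, rfl⟩
    · exact EqvGen.refl _
    · exact EqvGen.rel _ _ ⟨e, rfl, rfl, rfl⟩
    · exact EqvGen.symm _ _ (EqvGen.rel _ _ ⟨e, rfl, rfl, rfl⟩)

lemma contract_mk_endpoints (e : D.E) :
    Quotient.mk (EqvGen.setoid (D.touchRel {e})) (D.tail e)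
      = Quotient.mk (EqvGen.setoid (D.touchRel {e})) (D.head e) :=
  (contract_mk_eq_iff e _ _).mpr (Or.inr (Or.inl ⟨rfl, rfl⟩))

lemma contract_cutAt (e : D.E) (X : Set (D.contract {e}).V) :
    (D.contract {e}).cutAt X
      = Subtype.val ⁻¹' (D.cutAt {v : D.V | Quotient.mk (EqvGen.setoid (D.touchRel {e})) v ∈ X}) := by
  ext f
  rw [Set.mem_preimage, mem_cutAt_iff, mem_cutAt_iff]
  exact Iff.rfl

lemma contract_dijoin_of_avoid (D : MultiDigraph) (e : D.E)
    (h : ∃ J : Set D.E, ∀ S : Set D.E, D.IsDirectedBond S → e ∉ S → Odd (J ∩ S).ncard) :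
    (D.contract {e}).HasOddDijoin := by
  classical
  obtain ⟨J, hJ⟩ := h
  refine ⟨{f | f.1 ∈ J}, fun S' hS' => ?_⟩
  obtain ⟨⟨hcut', hmin'⟩, hne', X, hSeq, hdir'⟩ := hS'
  set q : D.V → (D.contract {e}).V := Quotient.mk (EqvGen.setoid (D.touchRel {e})) with hq
  set Y : Set D.V := {v : D.V | q v ∈ X} with hY
  set S : Set D.E := Subtype.val '' S' with hSdef
  have heS : e ∉ S := by
    rintro ⟨⟨f, hf⟩, -, hfe⟩
    exact hf (Set.mem_singleton_iff.mpr hfe)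
  have hecross : (D.tail e ∈ Y ↔ D.head e ∈ Y) := by
    simp only [hY, Set.mem_setOf_eq, hq]
    rw [contract_mk_endpoints e]
  have hScut : S = D.cutAt Y := by
    ext f
    by_cases hfe : f = e
    · subst hfe
      simp only [heS, false_iff, mem_cutAt_iff]
      intro hc
      exact hc hecross
    · constructor
      · rintro ⟨⟨g, hg⟩, hgS, rfl⟩
        have := hSeq ▸ hgS
        rw [contract_cutAt] at this
        exact this
      · intro hf
        refine ⟨⟨f, by simpa using hfe⟩, ?_, rfl⟩
        rw [hSeq, contract_cutAt]
        exact hf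
  have hbond : D.IsDirectedBond S := by
    have hSne : S.Nonempty := hne'.image _
    refine ⟨⟨⟨hSne, Y, hScut⟩, ?_⟩, hSne, Y, hScut, ?_⟩
    · -- minimality
      intro T hT hTS
      obtain ⟨hTne, Z, rfl⟩ := hT
      have heT : e ∉ D.cutAt Z := fun hc => heS (hTS hc)
      have hZsat : ∀ a b : D.V, q a = q b → (a ∈ Z ↔ b ∈ Z) := by
        intro a b hab
        rw [hq, contract_mk_eq_iff] at hab
        have heZ : (D.tail e ∈ Z ↔ D.head e ∈ Z) := by
          by_contra hc
          exact heT ((mem_cutAt_iff D Z e).mpr hc)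
        rcases hab with rfl | ⟨rfl, rfl⟩ | ⟨rfl, rfl⟩
        · exact Iff.rfl
        · exact heZ
        · exact heZ.symm
      set XZ : Set (D.contract {e}).V := {c | ∃ v ∈ Z, q v = c} with hXZ
      have hYXZ : {v : D.V | q v ∈ XZ} = Z := by
        ext w
        simp only [hXZ, Set.mem_setOf_eq]
        constructor
        · rintro ⟨v, hvZ, hvw⟩
          exact (hZsat v w hvw).mp hvZ
        · intro hw
          exact ⟨w, hw, rfl⟩
      have hcutXZ : (D.contract {e}).cutAt XZ = Subtype.val ⁻¹' (D.cutAt Z) := by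
        rw [contract_cutAt, hYXZ]
      have hsub : (D.contract {e}).cutAt XZ ⊆ S' := by
        intro f' hf'
        rw [hcutXZ] at hf'
        have hfS : Subtype.val f' ∈ S := hTS hf'
        obtain ⟨g', hg', hgf⟩ := hfS
        have hgf' : g' = f' := Subtype.val_injective hgf
        exact hgf' ▸ hg' 
      obtain ⟨t, ht⟩ := hTne
      have htS : t ∈ S := hTS ht
      obtain ⟨⟨t', ht'⟩, ht'S, rfl⟩ := htS
      have hXZcut : (D.contract {e}).IsCut ((D.contract {e}).cutAt XZ) := by
        refine ⟨⟨⟨t', ht'⟩, ?_⟩, XZ, rfl⟩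
        rw [hcutXZ]
        exact ht
      have := hmin' _ hXZcut hsub
      calc D.cutAt Z = Subtype.val '' (Subtype.val ⁻¹' (D.cutAt Z)) := by
            rw [Set.image_preimage_eq_of_subset]
            intro x hx
            have hxS : x ∈ S := hTS hx
            obtain ⟨x', -, rfl⟩ := hxS
            exact ⟨x', rfl⟩
        _ = Subtype.val '' ((D.contract {e}).cutAt XZ) := by rw [hcutXZ]
        _ = Subtype.val '' S' := by rw [this]
        _ = S := rfl
    · -- directedness
      intro f hf
      by_cases hfe : f = e
      · subst hfe
        rcases hecross with ⟨h1, h2⟩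
        exact hf.1 (h2 hf.2)
      · exact hdir' ⟨f, by simpa using hfe⟩ hf
  have hcd : ({f : (D.contract {e}).E | f.1 ∈ J} ∩ S').ncard = (J ∩ S).ncard := by
    rw [← Set.ncard_image_of_injective ({f : (D.contract {e}).E | f.1 ∈ J} ∩ S') Subtype.val_injective]
    congr 1
    ext g
    constructor
    · rintro ⟨⟨g', hg'⟩, ⟨hgJ, hgS⟩, rfl⟩
      exact ⟨hgJ, ⟨⟨g', hg'⟩, hgS, rfl⟩⟩
    · rintro ⟨hgJ, ⟨⟨g', hg'⟩, hgS, rfl⟩⟩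
      exact ⟨⟨g', hg'⟩, ⟨hgJ, hgS⟩, rfl⟩
  rw [hcd]
  exact hJ S hbond heS

lemma contract_hasOddDijoin (D : MultiDigraph) (e : D.E) (hD : D.HasOddDijoin) :
    (D.contract {e}).HasOddDijoin := by
  obtain ⟨J, hJ⟩ := hD
  exact contract_dijoin_of_avoid D e ⟨J, fun S hS _ => hJ S hS⟩

end ObstClosureVC


section ObstClosureE

open MultiDigraph

variable {D : MultiDigraph}

lemma ncard_inter_subtype {α : Type} [Fintype α] [DecidableEq α] (p : α → Prop) (K : Set α)
    (T : Set {x : α // p x}) :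
    (({f : {x : α // p x} | f.1 ∈ K} ∩ T).ncard) = (K ∩ (Subtype.val '' T)).ncard := by
  classical
  rw [← Set.ncard_image_of_injective ({f : {x : α // p x} | f.1 ∈ K} ∩ T) Subtype.val_injective]
  congr 1
  ext g
  constructor
  · rintro ⟨⟨g', hg'⟩, ⟨hgK, hgT⟩, rfl⟩
    exact ⟨hgK, ⟨⟨g', hg'⟩, hgT, rfl⟩⟩
  · rintro ⟨hgK, ⟨⟨g', hg'⟩, hgT, rfl⟩⟩
    exact ⟨⟨g', hg'⟩, ⟨hgK, hgT⟩, rfl⟩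

lemma symmDiff_inter_of_disjoint {α : Type} {L S : Set α} (h : L ∩ S = ∅) (J : Set α) :
    (symmDiff J L) ∩ S = J ∩ S := by
  ext x
  simp only [Set.mem_inter_iff, Set.mem_symmDiff]
  constructor
  · rintro ⟨hx, hxS⟩
    rcases hx with ⟨hJ, -⟩ | ⟨hLx, -⟩
    · exact ⟨hJ, hxS⟩
    · exact absurd (Set.eq_empty_iff_forall_notMem.mp h x ⟨hLx, hxS⟩) (by simp)
  · rintro ⟨hJ, hxS⟩
    have hxL : x ∉ L := fun hLx => Set.eq_empty_iff_forall_notMem.mp h x ⟨hLx, hxS⟩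
    exact ⟨Or.inl ⟨hJ, hxL⟩, hxS⟩

lemma symmDiff_inter_singleton_parity {α : Type} [Fintype α] [DecidableEq α]
    {L S : Set α} {f₀ : α} (hLS : L ∩ S = {f₀}) (J : Set α) :
    (Odd (((symmDiff J L) ∩ S).ncard) ↔ ¬ Odd ((J ∩ S).ncard)) := by
  classical
  have hf₀ : f₀ ∈ L ∩ S := by rw [hLS]; rfl
  have hLmem : ∀ x ∈ S, (x ∈ L ↔ x = f₀) := by
    intro x hxS
    constructor
    · intro hxL
      have : x ∈ L ∩ S := ⟨hxL, hxS⟩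
      rwa [hLS] at this
    · rintro rfl
      exact hf₀.1
  by_cases hfJ : f₀ ∈ J
  · have heq : (symmDiff J L) ∩ S = (J ∩ S) \ {f₀} := by
      ext x
      simp only [Set.mem_inter_iff, Set.mem_symmDiff, Set.mem_diff, Set.mem_singleton_iff]
      constructor
      · rintro ⟨hx, hxS⟩
        rcases hx with ⟨hJx, hLx⟩ | ⟨hLx, hJx⟩
        · refine ⟨⟨hJx, hxS⟩, fun hxf => hLx ((hLmem x hxS).mpr hxf)⟩
        · exact absurd hfJ (((hLmem x hxS).mp hLx) ▸ hJx)
      · rintro ⟨⟨hJx, hxS⟩, hxf⟩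
        exact ⟨Or.inl ⟨hJx, fun hLx => hxf ((hLmem x hxS).mp hLx)⟩, hxS⟩
    rw [heq]
    have hmem : f₀ ∈ J ∩ S := ⟨hfJ, hf₀.2⟩
    have h1 : ((J ∩ S) \ {f₀}).ncard + 1 = (J ∩ S).ncard :=
      Set.ncard_diff_singleton_add_one hmem
    rw [← h1, Nat.odd_add_one, not_not]
  · have heq : (symmDiff J L) ∩ S = insert f₀ (J ∩ S) := by
      ext x
      simp only [Set.mem_inter_iff, Set.mem_symmDiff, Set.mem_insert_iff]
      constructor
      · rintro ⟨hx, hxS⟩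
        rcases hx with ⟨hJx, hLx⟩ | ⟨hLx, hJx⟩
        · exact Or.inr ⟨hJx, hxS⟩
        · exact Or.inl ((hLmem x hxS).mp hLx)
      · rintro (rfl | ⟨hJx, hxS⟩)
        · exact ⟨Or.inr ⟨hf₀.1, hfJ⟩, hf₀.2⟩
        · refine ⟨Or.inl ⟨hJx, fun hLx => hfJ (((hLmem x hxS).mp hLx) ▸ hJx)⟩, hxS⟩
    rw [heq]
    have hnm : f₀ ∉ J ∩ S := fun hc => hfJ hc.1
    rw [Set.ncard_insert_of_notMem hnm, Nat.odd_add_one]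

lemma deleteEdge_cutAt (e : D.E) (Z : Set (D.deleteEdge e).V) :
    (D.deleteEdge e).cutAt Z = Subtype.val ⁻¹' (D.cutAt Z) := by
  ext f
  rw [Set.mem_preimage, mem_cutAt_iff, mem_cutAt_iff]

lemma deleteEdge_hasOddDijoin (D : MultiDigraph) (e : D.E) (hdel : D.Deletable e)
    (hD : D.HasOddDijoin) : (D.deleteEdge e).HasOddDijoin := by
  classical
  obtain ⟨J0, hJ0⟩ := hD
  obtain ⟨hloop, hpath⟩ := hdel
  obtain ⟨L, heL, hL⟩ := walk_crossing D e hpath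
  set K : Set D.E := if e ∈ J0 then symmDiff J0 L else J0 with hK
  refine ⟨{f : (D.deleteEdge e).E | f.1 ∈ K}, fun S' hS' => ?_⟩
  obtain ⟨⟨hcut', hmin'⟩, hne', X, hSeq, hdir'⟩ := hS'
  set S : Set D.E := Subtype.val '' S' with hSdef
  have hcs : ({f : (D.deleteEdge e).E | f.1 ∈ K} ∩ S').ncard = (K ∩ S).ncard :=
    ncard_inter_subtype (fun f : D.E => f ≠ e) K S' 
  have heS : e ∉ S := by
    rintro ⟨⟨g, hg⟩, -, hge⟩
    exact hg hge
  have hSne : S.Nonempty := hne'.image _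
  have memS' : ∀ (g : D.E) (hg : g ≠ e), g ∈ S → (⟨g, hg⟩ : {f : D.E // f ≠ e}) ∈ S' := by
    rintro g hg ⟨⟨g', hg'⟩, hmem, rfl⟩
    exact hmem
  have hSX : ∀ (f : D.E), f ≠ e → (f ∈ S ↔ f ∈ D.cutAt X) := by
    intro f hf
    constructor
    · rintro ⟨⟨g, hg⟩, hmem, rfl⟩
      have h2 := hSeq ▸ hmem
      rw [deleteEdge_cutAt] at h2
      exact h2
    · intro hfc
      refine ⟨⟨f, hf⟩, ?_, rfl⟩
      rw [hSeq, deleteEdge_cutAt]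
      exact hfc
  have hdirX : ∀ (f : D.E), f ≠ e → ¬(D.tail f ∉ X ∧ D.head f ∈ X) := by
    intro f hf
    exact hdir' ⟨f, hf⟩
  have hXdir : ∀ (f : D.E), ¬(D.tail f ∉ X ∧ D.head f ∈ X) := by
    intro f
    by_cases hf : f = e
    · subst hf
      rintro ⟨ht, hh⟩
      exact walk_stays_out D f hdirX hpath ht hh
    · exact hdirX f hf
  have pull : ∀ Z : Set D.V, (D.cutAt Z).Nonempty → D.cutAt Z ⊆ S → D.cutAt Z = S := by
    intro Z hZne hZS
    have heZ : e ∉ D.cutAt Z := fun hc => heS (hZS hc)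
    obtain ⟨t, ht⟩ := hZne
    have hte : t ≠ e := fun h => heZ (h ▸ ht)
    have hZcut : (D.deleteEdge e).IsCut (Subtype.val ⁻¹' (D.cutAt Z)) :=
      ⟨⟨⟨t, hte⟩, ht⟩, Z, deleteEdge_cutAt e Z⟩
    have hsubS' : (Subtype.val ⁻¹' (D.cutAt Z) : Set {f : D.E // f ≠ e}) ⊆ S' := by
      rintro ⟨g, hg⟩ hgmem
      exact memS' g hg (hZS hgmem)
    have hEqS' := hmin' _ hZcut hsubS'
    have himg : Subtype.val '' (Subtype.val ⁻¹' (D.cutAt Z) : Set {f : D.E // f ≠ e})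
        = D.cutAt Z := by
      apply Set.image_preimage_eq_of_subset
      intro x hx
      have hxe : x ≠ e := fun h => heZ (h ▸ hx)
      exact ⟨⟨x, hxe⟩, rfl⟩
    rw [← himg, hEqS']
  by_cases hcross : e ∈ D.cutAt X
  · -- e crosses X; it must leave X
    have htl : D.tail e ∈ X ∧ D.head e ∉ X := by
      rcases (mem_cutAt_iff D X e).mp hcross with h
      by_cases ht : D.tail e ∈ X
      · refine ⟨ht, fun hh => h ⟨fun _ => hh, fun _ => ht⟩⟩
      · exact absurd ⟨ht, by tauto⟩ (hXdir e)
    obtain ⟨htail, hhead⟩ := htl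
    have hC : D.cutAt X = insert e S := by
      ext f
      rw [Set.mem_insert_iff]
      constructor
      · intro hf
        by_cases hfe : f = e
        · exact Or.inl hfe
        · exact Or.inr ((hSX f hfe).mpr hf)
      · rintro (rfl | hfS)
        · exact hcross
        · have hfe : f ≠ e := fun h => heS (h ▸ hfS)
          exact (hSX f hfe).mp hfS
    obtain ⟨f₀, hf₀⟩ := (hL X hXdir).2.2 htail hhead
    have hf₀L : f₀ ∈ L ∧ f₀ ∈ D.cutAt X := by
      have : f₀ ∈ L ∩ D.cutAt X := by rw [hf₀]; rfl
      exact this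
    have hf₀e : f₀ ≠ e := fun h => heL (h ▸ hf₀L.1)
    have hf₀S : f₀ ∈ S := by
      rcases (hC ▸ hf₀L.2) with h | h
      · exact absurd h hf₀e
      · exact h
    have hLS : L ∩ S = {f₀} := by
      ext x
      constructor
      · rintro ⟨hxL, hxS⟩
        have hxc : x ∈ L ∩ D.cutAt X := ⟨hxL, by rw [hC]; exact Or.inr hxS⟩
        rwa [hf₀] at hxc
      · rintro rfl
        exact ⟨hf₀L.1, hf₀S⟩
    by_cases hS2 : D.IsCut S
    · -- S is itself a cut of D; then S is a directed bond of D and L ∩ S = ∅: contradiction?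
      -- No: here we show S is a directed bond via U or U', and L ∩ S = ∅.
      obtain ⟨-, Z₀, hZ₀⟩ := hS2
      have hSbond : D.IsBond S := by
        refine ⟨⟨hSne, Z₀, hZ₀⟩, fun T hT hTS => ?_⟩
        obtain ⟨hTne, Z, rfl⟩ := hT
        exact pull Z hTne hTS
      set r : D.V → D.V → Prop := fun a b => ∃ f : D.E, f ∉ S ∧ f ≠ e ∧
        ((D.tail f = a ∧ D.head f = b) ∨ (D.tail f = b ∧ D.head f = a)) with hr
      have hpres : ∀ (W : Set D.V), (∀ f : D.E, f ∉ S → f ≠ e →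
          (D.tail f ∈ W ↔ D.head f ∈ W)) →
          ∀ a b : D.V, EqvGen r a b → (a ∈ W ↔ b ∈ W) := by
        intro W hW a b hab
        refine eqvGen_pres ?_ hab
        rintro x y ⟨f, hfS, hfe, (⟨rfl, rfl⟩ | ⟨rfl, rfl⟩)⟩
        · exact hW f hfS hfe
        · exact (hW f hfS hfe).symm
      have hXW : ∀ f : D.E, f ∉ S → f ≠ e → (D.tail f ∈ X ↔ D.head f ∈ X) := by
        intro f hfS hfe
        by_contra hc
        have : f ∈ D.cutAt X := (mem_cutAt_iff D X f).mpr hc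
        rcases hC ▸ this with h | h
        · exact hfe h
        · exact hfS h
      have hSends : ∀ g ∈ S, D.tail g ∈ X ∧ D.head g ∉ X := by
        intro g hgS
        have hge : g ≠ e := fun h => heS (h ▸ hgS)
        have hgc : g ∈ D.cutAt X := (hSX g hge).mp hgS
        rcases hgc with h | h
        · exact h
        · exact absurd h (hXdir g)
      set U : Set D.V := {v | v ∈ X ∧ ¬ EqvGen r v (D.tail e)} with hU
      set U' : Set D.V := X ∪ {v | EqvGen r v (D.head e)} with hU'
      have hreach_iff : ∀ f : D.E, f ∉ S → f ≠ e → ∀ w : D.V,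
          (EqvGen r (D.tail f) w ↔ EqvGen r (D.head f) w) := by
        intro f hfS hfe w
        have hrel : EqvGen r (D.tail f) (D.head f) :=
          EqvGen.rel _ _ ⟨f, hfS, hfe, Or.inl ⟨rfl, rfl⟩⟩
        exact ⟨fun h => EqvGen.trans _ _ _ (EqvGen.symm _ _ hrel) h,
          fun h => EqvGen.trans _ _ _ hrel h⟩
      have hcutU : D.cutAt U ⊆ S := by
        intro f hf
        by_contra hfS
        by_cases hfe : f = e
        · subst hfe
          have h1 : D.tail f ∉ U := fun hc => hc.2 (EqvGen.refl _)
          have h2 : D.head f ∉ U := fun hc => hhead hc.1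
          exact (mem_cutAt_iff D U f).mp hf (iff_of_false h1 h2)
        · have h1 := hXW f hfS hfe
          have h2 := hreach_iff f hfS hfe (D.tail e)
          have : D.tail f ∈ U ↔ D.head f ∈ U := by
            simp only [hU, Set.mem_setOf_eq]
            rw [h1, h2]
          exact (mem_cutAt_iff D U f).mp hf this
      have hcutU' : D.cutAt U' ⊆ S := by
        intro f hf
        by_contra hfS
        by_cases hfe : f = e
        · subst hfe
          have h1 : D.tail f ∈ U' := Or.inl htail
          have h2 : D.head f ∈ U' := Or.inr (EqvGen.refl _)
          exact (mem_cutAt_iff D U' f).mp hf (iff_of_true h1 h2)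
        · have h1 := hXW f hfS hfe
          have h2 := hreach_iff f hfS hfe (D.head e)
          have : D.tail f ∈ U' ↔ D.head f ∈ U' := by
            simp only [hU', Set.mem_union, Set.mem_setOf_eq]
            rw [h1, h2]
          exact (mem_cutAt_iff D U' f).mp hf this
      have hLSe : L ∩ S = ∅ → False := by
        intro hc
        rw [hLS] at hc
        exact absurd hc (Set.singleton_ne_empty f₀)
      -- now the dichotomy
      by_cases hUne : (D.cutAt U).Nonempty
      · have hUS : D.cutAt U = S := hSbond.2 _ ⟨hUne, U, rfl⟩ hcutU
        have hUdir : ∀ f : D.E, ¬(D.tail f ∉ U ∧ D.head f ∈ U) := by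
          rintro f ⟨hf1, hf2⟩
          have hfc : f ∈ D.cutAt U := (mem_cutAt_iff D U f).mpr
            (fun hiff => hf1 (hiff.mpr hf2))
          have hfS : f ∈ S := hUS ▸ hfc
          exact (hSends f hfS).2 hf2.1
        have hdirbond : D.IsDirectedBond S := ⟨hSbond, hSne, U, hUS.symm, hUdir⟩
        have hLSd : L ∩ S = ∅ := by
          have h2 := (hL U hUdir).2.1 (fun hc => hc.2 (EqvGen.refl _))
          rwa [hUS] at h2
        rw [hLS] at hLSd
        exact absurd hLSd (Set.singleton_ne_empty f₀)
      · by_cases hU'ne : (D.cutAt U').Nonempty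
        · have hUS : D.cutAt U' = S := hSbond.2 _ ⟨hU'ne, U', rfl⟩ hcutU'
          have hUdir : ∀ f : D.E, ¬(D.tail f ∉ U' ∧ D.head f ∈ U') := by
            rintro f ⟨hf1, hf2⟩
            have hfc : f ∈ D.cutAt U' := (mem_cutAt_iff D U' f).mpr
              (fun hiff => hf1 (hiff.mpr hf2))
            have hfS : f ∈ S := hUS ▸ hfc
            exact hf1 (Or.inl (hSends f hfS).1)
          have hLSd : L ∩ S = ∅ := by
            have h2 := (hL U' hUdir).1 (Or.inl htail) (Or.inr (EqvGen.refl _))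
            rwa [hUS] at h2
          rw [hLS] at hLSd
          exact absurd hLSd (Set.singleton_ne_empty f₀)
        · -- both empty: contradiction
          exfalso
          obtain ⟨g₀, hg₀⟩ := hSne
          have hg₀e : g₀ ≠ e := fun h => heS (h ▸ hg₀)
          have hg₀X := hSends g₀ hg₀
          have hgU : g₀ ∉ D.cutAt U := fun hc => hUne ⟨g₀, hc⟩
          have hgU' : g₀ ∉ D.cutAt U' := fun hc => hU'ne ⟨g₀, hc⟩
          have hr1 : EqvGen r (D.tail g₀) (D.tail e) := by
            by_contra hc
            have h1 : D.tail g₀ ∈ U := ⟨hg₀X.1, hc⟩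
            have h2 : D.head g₀ ∉ U := fun hcc => hg₀X.2 hcc.1
            exact hgU ((mem_cutAt_iff D U g₀).mpr (fun hiff => h2 (hiff.mp h1)))
          have hr2 : EqvGen r (D.head g₀) (D.head e) := by
            by_contra hc
            have h1 : D.tail g₀ ∈ U' := Or.inl hg₀X.1
            have h2 : D.head g₀ ∉ U' := by
              rintro (hcc | hcc)
              · exact hg₀X.2 hcc
              · exact hc hcc
            exact hgU' ((mem_cutAt_iff D U' g₀).mpr (fun hiff => h2 (hiff.mp h1)))
          have hZpres : ∀ a b : D.V, EqvGen r a b → (a ∈ Z₀ ↔ b ∈ Z₀) := by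
            refine hpres Z₀ ?_
            intro f hfS hfe
            by_contra hc
            exact hfS (hZ₀ ▸ ((mem_cutAt_iff D Z₀ f).mpr hc))
          have heZ : (D.tail e ∈ Z₀ ↔ D.head e ∈ Z₀) := by
            by_contra hc
            exact heS (hZ₀ ▸ ((mem_cutAt_iff D Z₀ e).mpr hc))
          have hgZ : g₀ ∈ D.cutAt Z₀ := hZ₀ ▸ hg₀
          exact (mem_cutAt_iff D Z₀ g₀).mp hgZ
            ((hZpres _ _ hr1).trans (heZ.trans (hZpres _ _ hr2).symm))
    · -- S is not a cut of D: then cutAt X = insert e S is a directed bond of D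
      have hCbond : D.IsBond (D.cutAt X) := by
        refine ⟨⟨⟨e, hcross⟩, X, rfl⟩, fun T hT hTS => ?_⟩
        obtain ⟨hTne, Z, rfl⟩ := hT
        by_cases heT : e ∈ D.cutAt Z
        · have hTcontra : ∀ W : Set D.V, D.cutAt W = {e} → D.tail e ∈ W → D.head e ∉ W →
              False := by
            intro W hW htW hhW
            have hWdir : ∀ f : D.E, ¬(D.tail f ∉ W ∧ D.head f ∈ W) := by
              rintro f ⟨hf1, hf2⟩
              have : f ∈ D.cutAt W := (mem_cutAt_iff D W f).mpr
                (fun hiff => hf1 (hiff.mpr hf2))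
              rw [hW, Set.mem_singleton_iff] at this
              subst this
              exact hf1 htW
            obtain ⟨f₁, hf₁⟩ := (hL W hWdir).2.2 htW hhW
            have : f₁ ∈ L ∩ D.cutAt W := by rw [hf₁]; rfl
            rw [hW] at this
            obtain ⟨hf₁L, hf₁e⟩ := this
            rw [Set.mem_singleton_iff] at hf₁e
            exact heL (hf₁e ▸ hf₁L)
          by_cases hTe : D.cutAt Z = {e}
          · exfalso
            rcases heT with ⟨ht, hh⟩ | ⟨ht, hh⟩
            · exact hTcontra Z hTe ht hh
            · refine hTcontra Zᶜ (by rw [cutAt_compl]; exact hTe) (by simpa using ht)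
                (by simpa using hh)
          · -- T \ {e} is nonempty
            obtain ⟨t, htT, hte⟩ : ∃ t, t ∈ D.cutAt Z ∧ t ≠ e := by
              by_contra hc
              push_neg at hc
              apply hTe
              ext x
              simp only [Set.mem_singleton_iff]
              constructor
              · intro hx
                by_contra hxe
                exact hxe (hc x hx)
              · rintro rfl
                exact heT
            have hZcut : (D.deleteEdge e).IsCut (Subtype.val ⁻¹' (D.cutAt Z)) :=
              ⟨⟨⟨t, hte⟩, htT⟩, Z, deleteEdge_cutAt e Z⟩
            have hsubS' : (Subtype.val ⁻¹' (D.cutAt Z) : Set {f : D.E // f ≠ e}) ⊆ S' := by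
              rintro ⟨g, hg⟩ hgmem
              have hgS : g ∈ S := by
                rcases hC ▸ (hTS hgmem) with h | h
                · exact absurd h hg
                · exact h
              exact memS' g hg hgS
            have hEqS' := hmin' _ hZcut hsubS'
            have hTeq : D.cutAt Z \ {e} = S := by
              have himg : Subtype.val '' (Subtype.val ⁻¹' (D.cutAt Z) : Set {f : D.E // f ≠ e})
                  = D.cutAt Z \ {e} := by
                ext x
                constructor
                · rintro ⟨⟨g, hg⟩, hgmem, rfl⟩
                  exact ⟨hgmem, hg⟩
                · rintro ⟨hx, hxe⟩
                  exact ⟨⟨x, hxe⟩, hx, rfl⟩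
              rw [← himg, hEqS']
            rw [hC]
            rw [← hTeq]
            ext x
            simp only [Set.mem_insert_iff, Set.mem_diff, Set.mem_singleton_iff]
            constructor
            · intro hx
              by_cases hxe : x = e
              · exact Or.inl hxe
              · exact Or.inr ⟨hx, hxe⟩
            · rintro (rfl | ⟨hx, -⟩)
              · exact heT
              · exact hx
        · -- e ∉ T: then T ⊆ S and T = S, so S is a cut: contradiction
          exfalso
          have hTSS : D.cutAt Z ⊆ S := by
            intro x hx
            rcases hC ▸ (hTS hx) with h | h
            · exact absurd (h ▸ hx) heT
            · exact h
          have := pull Z hTne hTSS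
          exact hS2 ⟨hSne, Z, this.symm⟩
      have hdirbondC : D.IsDirectedBond (D.cutAt X) :=
        ⟨hCbond, ⟨e, hcross⟩, X, rfl, hXdir⟩
      have hoddC := hJ0 _ hdirbondC
      rw [hC] at hoddC
      by_cases heJ : e ∈ J0
      · have hJC : J0 ∩ insert e S = insert e (J0 ∩ S) := by
          ext x
          simp only [Set.mem_inter_iff, Set.mem_insert_iff]
          constructor
          · rintro ⟨hxJ, (rfl | hxS)⟩
            · exact Or.inl rfl
            · exact Or.inr ⟨hxJ, hxS⟩
          · rintro (rfl | ⟨hxJ, hxS⟩)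
            · exact ⟨heJ, Or.inl rfl⟩
            · exact ⟨hxJ, Or.inr hxS⟩
        rw [hJC, Set.ncard_insert_of_notMem (fun hc => heS hc.2), Nat.odd_add_one] at hoddC
        rw [hcs]
        have hKS : K = symmDiff J0 L := by rw [hK, if_pos heJ]
        rw [hKS]
        exact (symmDiff_inter_singleton_parity hLS J0).mpr hoddC
      · have hJC : J0 ∩ insert e S = J0 ∩ S := by
          ext x
          simp only [Set.mem_inter_iff, Set.mem_insert_iff]
          constructor
          · rintro ⟨hxJ, (rfl | hxS)⟩
            · exact absurd hxJ heJ
            · exact ⟨hxJ, hxS⟩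
          · rintro ⟨hxJ, hxS⟩
            exact ⟨hxJ, Or.inr hxS⟩
        rw [hJC] at hoddC
        rw [hcs]
        have hKS : K = J0 := by rw [hK, if_neg heJ]
        rw [hKS]
        exact hoddC
  · -- e does not cross X: S is a directed bond of D and L misses S
    have hSC : S = D.cutAt X := by
      ext f
      by_cases hfe : f = e
      · subst hfe
        simp only [heS, false_iff]
        exact fun hc => hcross hc
      · exact hSX f hfe
    have hSbond : D.IsBond S := by
      refine ⟨⟨hSne, X, hSC⟩, fun T hT hTS => ?_⟩
      obtain ⟨hTne, Z, rfl⟩ := hT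
      exact pull Z hTne hTS
    have hdirbond : D.IsDirectedBond S := ⟨hSbond, hSne, X, hSC, hXdir⟩
    have hodd := hJ0 _ hdirbond
    have hLSd : L ∩ S = ∅ := by
      by_cases ht : D.tail e ∈ X
      · have hh : D.head e ∈ X := by
          by_contra hh
          exact hcross ((mem_cutAt_iff D X e).mpr (by tauto))
        have h2 := (hL X hXdir).1 ht hh
        rw [hSC]
        exact h2
      · have h2 := (hL X hXdir).2.1 ht
        rw [hSC]
        exact h2
    rw [hcs]
    by_cases heJ : e ∈ J0
    · have hKS : K = symmDiff J0 L := by rw [hK, if_pos heJ]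
      rw [hKS, symmDiff_inter_of_disjoint hLSd J0]
      exact hodd
    · have hKS : K = J0 := by rw [hK, if_neg heJ]
      rw [hKS]
      exact hodd

end ObstClosureE


section ObstAssemble

open MultiDigraph

lemma cutMinor_hasOddDijoin {D₁ D₂ : MultiDigraph} (h : IsCutMinor D₁ D₂)
    (hD : D₂.HasOddDijoin) : D₁.HasOddDijoin := by
  induction h using Relation.ReflTransGen.head_induction_on with
  | refl => exact hD
  | @head a c hstep hrest ih =>
    cases hstep with
    | contractEdge _ e => exact contract_hasOddDijoin _ e ih
    | delEdge _ e hdel => exact deleteEdge_hasOddDijoin _ e hdel ih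
    | delVertex _ v hiso => exact deleteVertex_hasOddDijoin v hiso ih

lemma minimal_of_model {D M : MultiDigraph} (φ : DigraphIso D M)
    (hnd : ¬ M.HasOddDijoin)
    (hdel : ∀ e : M.E, ¬ M.Deletable e)
    (hiso : ∀ v : M.V, ¬ M.Isolated v)
    (havoid : ∀ e : M.E, ∃ J : Set M.E, ∀ S : Set M.E, M.IsDirectedBond S → e ∉ S →
      Odd (J ∩ S).ncard) :
    MinimalObstruction D := by
  constructor
  · intro hD
    exact hnd (iso_hasOddDijoin φ hD)
  · rintro D' ⟨hminor, hniso⟩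
    rcases Relation.ReflTransGen.cases_tail hminor with heq | ⟨c, hchain, hstep⟩
    · subst heq
      exact absurd ⟨digraphIsoRefl _⟩ hniso
    · have hcOdd : c.HasOddDijoin := by
        cases hstep with
        | contractEdge _ e =>
          exact contract_dijoin_of_avoid _ e (iso_avoid_dijoin φ e (havoid (φ.emap e)))
        | delEdge _ e hdel' => exact absurd (iso_deletable φ hdel') (hdel _)
        | delVertex _ v hiso' => exact absurd (iso_isolated φ hiso') (hiso _)
      exact cutMinor_hasOddDijoin hchain hcOdd

end ObstAssemble


section ObstOneDir

open MultiDigraph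

lemma fin_exists_ne {k : ℕ} (hk : 2 ≤ k) (i : Fin k) : ∃ i' : Fin k, i' ≠ i := by
  by_cases h : i = ⟨0, by omega⟩
  · exact ⟨⟨1, by omega⟩, by simp [h, Fin.ext_iff]⟩
  · exact ⟨⟨0, by omega⟩, fun hc => h hc.symm⟩

variable {m n : ℕ}

def odStar (m n : ℕ) (a : Fin m) : Set (oneDirK m n).E := {p : Fin m × Fin n | p.1 = a}

def odCostar (m n : ℕ) (b : Fin n) : Set (oneDirK m n).E := {p : Fin m × Fin n | p.2 = b}

lemma oneDir_mem_cutAt (X : Set (oneDirK m n).V) (p : Fin m × Fin n) :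
    p ∈ (oneDirK m n).cutAt X ↔ ¬(Sum.inl p.1 ∈ X ↔ Sum.inr p.2 ∈ X) := by
  rw [mem_cutAt_iff]

lemma odStar_cutAt (a : Fin m) :
    (oneDirK m n).cutAt {Sum.inl a} = odStar m n a := by
  ext p
  rw [oneDir_mem_cutAt]
  show _ ↔ p.1 = a
  simp

lemma odCostar_cutAt (b : Fin n) :
    (oneDirK m n).cutAt {Sum.inr b} = odCostar m n b := by
  ext p
  rw [oneDir_mem_cutAt]
  show _ ↔ p.2 = b
  simp

lemma odStar_isCut (hn : 1 ≤ n) (a : Fin m) : (oneDirK m n).IsCut (odStar m n a) :=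
  ⟨⟨(a, ⟨0, hn⟩), rfl⟩, {Sum.inl a}, (odStar_cutAt a).symm⟩

lemma odCostar_isCut (hm : 1 ≤ m) (b : Fin n) : (oneDirK m n).IsCut (odCostar m n b) :=
  ⟨⟨(⟨0, hm⟩, b), rfl⟩, {Sum.inr b}, (odCostar_cutAt b).symm⟩

lemma odStar_isBond (hm : 2 ≤ m) (hn : 1 ≤ n) (a : Fin m) :
    (oneDirK m n).IsBond (odStar m n a) := by
  refine ⟨odStar_isCut hn a, ?_⟩
  rintro T ⟨hTne, Y, rfl⟩ hsub
  have hY : ∀ p : Fin m × Fin n, p.1 ≠ a → (Sum.inl p.1 ∈ Y ↔ Sum.inr p.2 ∈ Y) := by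
    intro p hp
    by_contra hc
    exact hp (hsub ((oneDir_mem_cutAt Y p).mpr hc))
  obtain ⟨a₁, ha₁⟩ := fin_exists_ne hm a
  have hsinks : ∀ b : Fin n, (Sum.inr b ∈ Y ↔ Sum.inl a₁ ∈ Y) := fun b =>
    (hY (a₁, b) ha₁).symm
  obtain ⟨t, ht⟩ := hTne
  have hta : t.1 = a := hsub ht
  have hcross : ¬(Sum.inl a ∈ Y ↔ Sum.inr t.2 ∈ Y) := by
    have := (oneDir_mem_cutAt Y t).mp ht
    rwa [hta] at this
  ext p
  rw [oneDir_mem_cutAt]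
  show _ ↔ p.1 = a
  constructor
  · intro hp
    by_contra hpa
    exact hp (hY p hpa)
  · intro hpa
    rw [hpa]
    intro hiff
    exact hcross (hiff.trans ((hsinks p.2).trans (hsinks t.2).symm))
  -- done

lemma odCostar_isBond (hm : 1 ≤ m) (hn : 2 ≤ n) (b : Fin n) :
    (oneDirK m n).IsBond (odCostar m n b) := by
  refine ⟨odCostar_isCut hm b, ?_⟩
  rintro T ⟨hTne, Y, rfl⟩ hsub
  have hY : ∀ p : Fin m × Fin n, p.2 ≠ b → (Sum.inl p.1 ∈ Y ↔ Sum.inr p.2 ∈ Y) := by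
    intro p hp
    by_contra hc
    exact hp (hsub ((oneDir_mem_cutAt Y p).mpr hc))
  obtain ⟨b₁, hb₁⟩ := fin_exists_ne hn b
  have hsrc : ∀ a : Fin m, (Sum.inl a ∈ Y ↔ Sum.inr b₁ ∈ Y) := fun a =>
    hY (a, b₁) hb₁
  obtain ⟨t, ht⟩ := hTne
  have htb : t.2 = b := hsub ht
  have hcross : ¬(Sum.inl t.1 ∈ Y ↔ Sum.inr b ∈ Y) := by
    have := (oneDir_mem_cutAt Y t).mp ht
    rwa [htb] at this
  ext p
  rw [oneDir_mem_cutAt]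
  show _ ↔ p.2 = b
  constructor
  · intro hp
    by_contra hpb
    exact hp (hY p hpb)
  · intro hpb
    rw [hpb]
    intro hiff
    exact hcross (((hsrc t.1).trans (hsrc p.1).symm).trans hiff)

lemma odStar_isDirectedBond (hm : 2 ≤ m) (hn : 1 ≤ n) (a : Fin m) :
    (oneDirK m n).IsDirectedBond (odStar m n a) := by
  refine ⟨odStar_isBond hm hn a, ⟨(a, ⟨0, hn⟩), rfl⟩, {Sum.inl a}, (odStar_cutAt a).symm, ?_⟩
  rintro p ⟨-, hp⟩
  simp [oneDirK] at hp

lemma odCostar_isDirectedBond (hm : 1 ≤ m) (hn : 2 ≤ n) (b : Fin n) :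
    (oneDirK m n).IsDirectedBond (odCostar m n b) := by
  refine ⟨odCostar_isBond hm hn b, ⟨(⟨0, hm⟩, b), rfl⟩, {Sum.inr b}ᶜ, ?_, ?_⟩
  · rw [cutAt_compl, odCostar_cutAt]
  · rintro p ⟨hp, -⟩
    simp [oneDirK] at hp

lemma oneDir_classify (hm : 2 ≤ m) (hn : 2 ≤ n) {S : Set (oneDirK m n).E}
    (hS : (oneDirK m n).IsDirectedBond S) :
    (∃ a, S = odStar m n a) ∨ (∃ b, S = odCostar m n b) := by
  obtain ⟨⟨hcut, hmin⟩, hne, X, hSeq, hdir⟩ := hS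
  subst hSeq
  have hdir' : ∀ (p : Fin m × Fin n), Sum.inr p.2 ∈ X → Sum.inl p.1 ∈ X := by
    intro p hp
    by_contra hc
    exact hdir p ⟨hc, hp⟩
  by_cases hsink : ∃ b : Fin n, Sum.inr b ∈ X
  · obtain ⟨b₂, hb₂⟩ := hsink
    have hall : ∀ a : Fin m, Sum.inl a ∈ X := fun a => hdir' (a, b₂) hb₂
    have hform : ∀ p : Fin m × Fin n, p ∈ (oneDirK m n).cutAt X ↔ Sum.inr p.2 ∉ X := by
      intro p
      rw [oneDir_mem_cutAt]
      simp [hall p.1]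
    obtain ⟨t, ht⟩ := hne
    have htb : Sum.inr t.2 ∉ X := (hform t).mp ht
    right
    refine ⟨t.2, ?_⟩
    ext p
    rw [hform p]
    show _ ↔ p.2 = t.2
    constructor
    · intro hp
      by_contra hne2
      have hsubc : odCostar m n p.2 ⊆ (oneDirK m n).cutAt X := by
        intro q hq
        rw [hform q]
        have hq2 : q.2 = p.2 := hq
        rw [hq2]
        exact hp
      have hceq := hmin _ (odCostar_isCut (by omega) p.2) hsubc
      rw [← hceq] at ht
      exact hne2 ((show t.2 = p.2 from ht).symm ▸ rfl)
    · intro hp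
      have : (p.2 : Fin n) = t.2 := hp
      rw [this]
      exact htb
  · push_neg at hsink
    have hform : ∀ p : Fin m × Fin n, p ∈ (oneDirK m n).cutAt X ↔ Sum.inl p.1 ∈ X := by
      intro p
      rw [oneDir_mem_cutAt]
      simp [hsink p.2]
    obtain ⟨t, ht⟩ := hne
    have hta : Sum.inl t.1 ∈ X := (hform t).mp ht
    left
    refine ⟨t.1, ?_⟩
    ext p
    rw [hform p]
    show _ ↔ p.1 = t.1
    constructor
    · intro hp
      by_contra hne2
      have hsubc : odStar m n p.1 ⊆ (oneDirK m n).cutAt X := by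
        intro q hq
        rw [hform q]
        have hq2 : q.1 = p.1 := hq
        rw [hq2]
        exact hp
      have hceq := hmin _ (odStar_isCut (by omega) p.1) hsubc
      rw [← hceq] at ht
      exact hne2 ((show t.1 = p.1 from ht).symm ▸ rfl)
    · intro hp
      have : (p.1 : Fin m) = t.1 := hp
      rw [this]
      exact hta

lemma oneDir_no_oddDijoin (hm : 2 ≤ m) (hn : 2 ≤ n) (hodd : Odd (m + n)) :
    ¬ (oneDirK m n).HasOddDijoin := by
  classical
  refine no_oddDijoin_of_cover _ (ι := Fin m ⊕ Fin n)
    (Sum.elim (fun a => odStar m n a) (fun b => odCostar m n b)) ?_ ?_ ?_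
  · rintro (a | b)
    · exact odStar_isDirectedBond hm (by omega) a
    · exact odCostar_isDirectedBond (by omega) hn b
  · intro p
    have hset : {i : Fin m ⊕ Fin n | p ∈ Sum.elim (fun a => odStar m n a)
        (fun b => odCostar m n b) i} = {Sum.inl p.1, Sum.inr p.2} := by
      ext i
      rcases i with a | b
      · show p ∈ odStar m n a ↔ _
        simp only [odStar, Set.mem_setOf_eq, Set.mem_insert_iff, Set.mem_singleton_iff]
        constructor
        · intro h
          exact Or.inl (by rw [h])
        · rintro (h | h)
          · exact (Sum.inl_injective h).symm
          · exact absurd h (by simp)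
      · show p ∈ odCostar m n b ↔ _
        simp only [odCostar, Set.mem_setOf_eq, Set.mem_insert_iff, Set.mem_singleton_iff]
        constructor
        · intro h
          exact Or.inr (by rw [h])
        · rintro (h | h)
          · exact absurd h (by simp)
          · exact (Sum.inr_injective h).symm
    rw [hset, Set.ncard_pair (by simp)]
    exact ⟨1, rfl⟩
  · simpa using hodd

lemma oneDir_avoid (hm : 2 ≤ m) (hn : 2 ≤ n) (e : (oneDirK m n).E) :
    ∃ J : Set (oneDirK m n).E, ∀ S : Set (oneDirK m n).E,
      (oneDirK m n).IsDirectedBond S → e ∉ S → Odd (J ∩ S).ncard := by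
  classical
  refine ⟨{p : Fin m × Fin n | (p.1 = e.1 ∧ p.2 ≠ e.2) ∨ (p.2 = e.2 ∧ p.1 ≠ e.1)},
    fun S hS heS => ?_⟩
  rcases oneDir_classify hm hn hS with ⟨a, rfl⟩ | ⟨b, rfl⟩
  · have ha : a ≠ e.1 := by
      intro h
      exact heS (show e.1 = a from h.symm)
    have hJ : {p : Fin m × Fin n | (p.1 = e.1 ∧ p.2 ≠ e.2) ∨ (p.2 = e.2 ∧ p.1 ≠ e.1)}
        ∩ odStar m n a = {(a, e.2)} := by
      ext p
      simp only [Set.mem_inter_iff, Set.mem_setOf_eq, Set.mem_singleton_iff, odStar,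
        Prod.ext_iff]
      constructor
      · rintro ⟨(⟨h1, h2⟩ | ⟨h1, h2⟩), h3⟩
        · exact absurd (h3 ▸ h1) ha
        · exact ⟨h3, h1⟩
      · rintro ⟨h1, h2⟩
        exact ⟨Or.inr ⟨h2, h1 ▸ ha⟩, h1⟩
    rw [hJ, Set.ncard_singleton]
    exact ⟨0, rfl⟩
  · have hb : b ≠ e.2 := by
      intro h
      exact heS (show e.2 = b from h.symm)
    have hJ : {p : Fin m × Fin n | (p.1 = e.1 ∧ p.2 ≠ e.2) ∨ (p.2 = e.2 ∧ p.1 ≠ e.1)}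
        ∩ odCostar m n b = {(e.1, b)} := by
      ext p
      simp only [Set.mem_inter_iff, Set.mem_setOf_eq, Set.mem_singleton_iff, odCostar,
        Prod.ext_iff]
      constructor
      · rintro ⟨(⟨h1, h2⟩ | ⟨h1, h2⟩), h3⟩
        · exact ⟨h1, h3⟩
        · exact absurd (h3 ▸ h1) hb
      · rintro ⟨h1, h2⟩
        exact ⟨Or.inl ⟨h1, h2 ▸ hb⟩, h2⟩
    rw [hJ, Set.ncard_singleton]
    exact ⟨0, rfl⟩

lemma oneDir_no_deletable (e : (oneDirK m n).E) : ¬ (oneDirK m n).Deletable e := by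
  rintro ⟨-, hpath⟩
  have hclosed : ∀ a b : (oneDirK m n).V, (oneDirK m n).dstepAvoiding e a b →
      a ∈ {v : (oneDirK m n).V | v = Sum.inl e.1 ∨ ∃ b' : Fin n, v = Sum.inr b' ∧ b' ≠ e.2} →
      b ∈ {v : (oneDirK m n).V | v = Sum.inl e.1 ∨ ∃ b' : Fin n, v = Sum.inr b' ∧ b' ≠ e.2} := by
    rintro a b ⟨f, hfe, rfl, rfl⟩ ha
    rcases ha with h1 | ⟨b', hb', -⟩
    · have hf1 : f.1 = e.1 := Sum.inl_injective h1
      refine Or.inr ⟨f.2, rfl, fun hc => hfe (Prod.ext_iff.mpr ⟨hf1, hc⟩)⟩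
    · exact absurd hb' (by simp [oneDirK])
  have hend := walk_closed hclosed hpath (Or.inl rfl)
  rcases hend with h | ⟨b', hb', hbne⟩
  · simp [oneDirK] at h
  · exact hbne (Sum.inr_injective hb').symm

lemma oneDir_no_isolated (hm : 2 ≤ m) (hn : 2 ≤ n) (v : (oneDirK m n).V) :
    ¬ (oneDirK m n).Isolated v := by
  intro h
  rcases v with a | b
  · exact (h (a, ⟨0, by omega⟩)).1 rfl
  · exact (h (⟨0, by omega⟩, b)).2 rfl

end ObstOneDir


section ObstDiamond

open MultiDigraph

lemma fin2_ne_iff (a b : Fin 2) : a ≠ b ↔ a = b + 1 := by revert a b; decide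

lemma fin2_add_one_ne (a : Fin 2) : a + 1 ≠ a := by revert a; decide

lemma fin2_add_add (a : Fin 2) : a + 1 + 1 = a := by revert a; decide

lemma fin2_swap (a b : Fin 2) : a = b + 1 ↔ b = a + 1 := by revert a b; decide

lemma fin2_cases (a : Fin 2) : a = 0 ∨ a = 1 := by revert a; decide

lemma fin2_two_cases (a b : Fin 2) : b = a ∨ b = a + 1 := by revert a b; decide

lemma bool_fs (b : Bool) : b = false ∨ b = true := by
  rcases b with _ | _
  · exact Or.inl rfl
  · exact Or.inr rfl

variable {n : ℕ} {σ : Fin n → Bool}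

def dmStar (n : ℕ) (σ : Fin n → Bool) (i : Fin n) : Set (diamondD n σ).E :=
  {p : Fin n × Fin 2 | p.1 = i}

def dmq (σ : Fin n → Bool) (j : Fin 2) (i : Fin n) : Fin 2 := if σ i then j + 1 else j

def dmSide (n : ℕ) (σ : Fin n → Bool) (j : Fin 2) : Set (diamondD n σ).E :=
  {p : Fin n × Fin 2 | p.2 = dmq σ j p.1}

lemma dm_tail_src (p : Fin n × Fin 2) (h : σ p.1 = true) :
    (diamondD n σ).tail p = Sum.inl p.1 := by
  show (if σ p.1 then (Sum.inl p.1 : Fin n ⊕ Fin 2) else Sum.inr p.2) = _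
  simp [h]

lemma dm_tail_snk (p : Fin n × Fin 2) (h : σ p.1 = false) :
    (diamondD n σ).tail p = Sum.inr p.2 := by
  show (if σ p.1 then (Sum.inl p.1 : Fin n ⊕ Fin 2) else Sum.inr p.2) = _
  simp [h]

lemma dm_head_src (p : Fin n × Fin 2) (h : σ p.1 = true) :
    (diamondD n σ).head p = Sum.inr p.2 := by
  show (if σ p.1 then (Sum.inr p.2 : Fin n ⊕ Fin 2) else Sum.inl p.1) = _
  simp [h]

lemma dm_head_snk (p : Fin n × Fin 2) (h : σ p.1 = false) :
    (diamondD n σ).head p = Sum.inl p.1 := by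
  show (if σ p.1 then (Sum.inr p.2 : Fin n ⊕ Fin 2) else Sum.inl p.1) = _
  simp [h]

lemma dm_mem_cutAt (X : Set (diamondD n σ).V) (p : Fin n × Fin 2) :
    p ∈ (diamondD n σ).cutAt X ↔ ¬(Sum.inl p.1 ∈ X ↔ Sum.inr p.2 ∈ X) := by
  rw [mem_cutAt_iff]
  rcases bool_fs (σ p.1) with h | h
  · rw [dm_tail_snk p h, dm_head_snk p h]
    tauto
  · rw [dm_tail_src p h, dm_head_src p h]

lemma dmStar_cutAt (i : Fin n) :
    (diamondD n σ).cutAt {Sum.inl i} = dmStar n σ i := by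
  ext p
  rw [dm_mem_cutAt]
  show _ ↔ p.1 = i
  simp

lemma dmStar_isCut (i : Fin n) : (diamondD n σ).IsCut (dmStar n σ i) :=
  ⟨⟨(i, 0), rfl⟩, {Sum.inl i}, (dmStar_cutAt i).symm⟩

def dmX (n : ℕ) (σ : Fin n → Bool) (j : Fin 2) : Set (diamondD n σ).V :=
  Sum.elim (fun i => σ i = true) (fun j' => j' = j)

lemma dmSide_cutAt (j : Fin 2) :
    (diamondD n σ).cutAt (dmX n σ j) = dmSide n σ j := by
  ext p
  rw [dm_mem_cutAt]
  show ¬((σ p.1 = true) ↔ (p.2 = j)) ↔ p.2 = dmq σ j p.1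
  rcases bool_fs (σ p.1) with h | h <;> rw [dmq, h] <;> simp
  exact (fin2_ne_iff p.2 j)

lemma dmSide_isCut (hn : 3 ≤ n) (j : Fin 2) : (diamondD n σ).IsCut (dmSide n σ j) := by
  refine ⟨⟨(⟨0, by omega⟩, dmq σ j ⟨0, by omega⟩), rfl⟩, dmX n σ j, (dmSide_cutAt j).symm⟩

lemma dmStar_isBond (hn : 3 ≤ n) (i : Fin n) :
    (diamondD n σ).IsBond (dmStar n σ i) := by
  refine ⟨dmStar_isCut i, ?_⟩
  rintro T ⟨hTne, Y, rfl⟩ hsub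
  have hY : ∀ p : Fin n × Fin 2, p.1 ≠ i → (Sum.inl p.1 ∈ Y ↔ Sum.inr p.2 ∈ Y) := by
    intro p hp
    by_contra hc
    exact hp (hsub ((dm_mem_cutAt Y p).mpr hc))
  obtain ⟨i₀, hi₀⟩ := fin_exists_ne (by omega : 2 ≤ n) i
  have hhub : ∀ j2 : Fin 2, (Sum.inr j2 ∈ Y ↔ Sum.inl i₀ ∈ Y) := fun j2 =>
    (hY (i₀, j2) hi₀).symm
  obtain ⟨t, ht⟩ := hTne
  have hta : t.1 = i := hsub ht
  have hcross : ¬(Sum.inl i ∈ Y ↔ Sum.inr t.2 ∈ Y) := by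
    have := (dm_mem_cutAt Y t).mp ht
    rwa [hta] at this
  ext p
  rw [dm_mem_cutAt]
  show _ ↔ p.1 = i
  constructor
  · intro hp
    by_contra hpa
    exact hp (hY p hpa)
  · intro hpa
    rw [hpa]
    intro hiff
    exact hcross (hiff.trans ((hhub p.2).trans (hhub t.2).symm))

lemma dmSide_isBond (hn : 3 ≤ n) (j : Fin 2) :
    (diamondD n σ).IsBond (dmSide n σ j) := by
  refine ⟨dmSide_isCut hn j, ?_⟩
  rintro T ⟨hTne, Y, rfl⟩ hsub
  have hY : ∀ i : Fin n, (Sum.inl i ∈ Y ↔ Sum.inr (dmq σ j i + 1) ∈ Y) := by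
    intro i
    by_contra hc
    have hmem := hsub ((dm_mem_cutAt Y (i, dmq σ j i + 1)).mpr hc)
    exact fin2_add_one_ne (dmq σ j i) hmem
  obtain ⟨t, ht⟩ := hTne
  have htmem : t.2 = dmq σ j t.1 := hsub ht
  have hcross : ¬(Sum.inl t.1 ∈ Y ↔ Sum.inr (dmq σ j t.1) ∈ Y) := by
    have := (dm_mem_cutAt Y t).mp ht
    rwa [htmem] at this
  have hkey : ¬(Sum.inr (dmq σ j t.1 + 1) ∈ Y ↔ Sum.inr (dmq σ j t.1) ∈ Y) := by
    intro hiff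
    exact hcross ((hY t.1).trans hiff)
  have hkey' : ∀ b : Fin 2, ¬(Sum.inr (b + 1) ∈ Y ↔ Sum.inr b ∈ Y) := by
    intro b hiff
    rcases fin2_two_cases (dmq σ j t.1) b with hb | hb
    · rw [hb] at hiff
      exact hkey hiff
    · rw [hb, fin2_add_add] at hiff
      exact hkey hiff.symm
  ext p
  rw [dm_mem_cutAt]
  show _ ↔ p.2 = dmq σ j p.1
  constructor
  · intro hp
    by_contra hpa
    have hpa' := (fin2_ne_iff p.2 (dmq σ j p.1)).mp hpa
    refine hp ?_
    rw [hpa']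
    exact hY p.1
  · intro hpa
    rw [hpa]
    intro hiff
    exact hkey' (dmq σ j p.1) (((hY p.1).symm.trans hiff))

lemma dmStar_isDirectedBond (hn : 3 ≤ n) (i : Fin n) :
    (diamondD n σ).IsDirectedBond (dmStar n σ i) := by
  refine ⟨dmStar_isBond hn i, ⟨(i, 0), rfl⟩, ?_⟩
  rcases bool_fs (σ i) with hσ | hσ
  · -- sink: use complement
    refine ⟨{Sum.inl i}ᶜ, by rw [cutAt_compl, dmStar_cutAt], ?_⟩
    rintro p ⟨hp1, -⟩
    rw [Set.notMem_compl_iff] at hp1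
    rcases bool_fs (σ p.1) with h | h
    · rw [dm_tail_snk p h] at hp1
      simp at hp1
    · rw [dm_tail_src p h] at hp1
      rw [Set.mem_singleton_iff] at hp1
      have : p.1 = i := Sum.inl_injective hp1
      rw [← this] at hσ
      rw [h] at hσ
      exact Bool.noConfusion hσ
  · refine ⟨{Sum.inl i}, (dmStar_cutAt i).symm, ?_⟩
    rintro p ⟨-, hp2⟩
    rcases bool_fs (σ p.1) with h | h
    · rw [dm_head_snk p h] at hp2
      rw [Set.mem_singleton_iff] at hp2
      have : p.1 = i := Sum.inl_injective hp2
      rw [← this] at hσ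
      rw [h] at hσ
      exact Bool.noConfusion hσ
    · rw [dm_head_src p h] at hp2
      simp at hp2

lemma dmSide_isDirectedBond (hn : 3 ≤ n) (j : Fin 2) :
    (diamondD n σ).IsDirectedBond (dmSide n σ j) := by
  refine ⟨dmSide_isBond hn j,
    ⟨(⟨0, by omega⟩, dmq σ j ⟨0, by omega⟩), rfl⟩, dmX n σ j, (dmSide_cutAt j).symm, ?_⟩
  rintro p ⟨hp1, hp2⟩
  rcases bool_fs (σ p.1) with h | h
  · rw [dm_head_snk p h] at hp2
    have : σ p.1 = true := hp2
    rw [h] at this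
    exact Bool.noConfusion this
  · rw [dm_tail_src p h] at hp1
    exact hp1 h

lemma dm_classify (hn : 3 ≤ n) {S : Set (diamondD n σ).E}
    (hS : (diamondD n σ).IsDirectedBond S) :
    (∃ i, S = dmStar n σ i) ∨ (∃ j, S = dmSide n σ j) := by
  obtain ⟨⟨hcut, hmin⟩, hne, X, hSeq, hdir⟩ := hS
  subst hSeq
  have hsrc : ∀ p : Fin n × Fin 2, σ p.1 = true → Sum.inr p.2 ∈ X → Sum.inl p.1 ∈ X := by
    intro p hσ hin
    by_contra hc
    refine hdir p ⟨?_, ?_⟩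
    · rw [dm_tail_src p hσ]
      exact hc
    · rw [dm_head_src p hσ]
      exact hin
  have hsink : ∀ p : Fin n × Fin 2, σ p.1 = false → Sum.inl p.1 ∈ X → Sum.inr p.2 ∈ X := by
    intro p hσ hin
    by_contra hc
    refine hdir p ⟨?_, ?_⟩
    · rw [dm_tail_snk p hσ]
      exact hc
    · rw [dm_head_snk p hσ]
      exact hin
  have star_unique : ∀ (P : Fin n → Prop),
      (∀ p : Fin n × Fin 2, p ∈ (diamondD n σ).cutAt X ↔ P p.1) →
      ∃ i, (diamondD n σ).cutAt X = dmStar n σ i := by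
    intro P hform
    obtain ⟨t, ht⟩ := hne
    refine ⟨t.1, ?_⟩
    have hti : P t.1 := (hform t).mp ht
    ext p
    rw [hform p]
    show _ ↔ p.1 = t.1
    constructor
    · intro hp
      by_contra hne2
      have hsubc : dmStar n σ p.1 ⊆ (diamondD n σ).cutAt X := by
        intro q hq
        refine (hform q).mpr ?_
        rw [show q.1 = p.1 from hq]
        exact hp
      have hceq := hmin _ (dmStar_isCut p.1) hsubc
      rw [← hceq] at ht
      exact hne2 ((show t.1 = p.1 from ht).symm ▸ rfl)
    · intro hp
      rw [show p.1 = t.1 from hp]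
      exact hti
  by_cases h0 : (Sum.inr 0 : Fin n ⊕ Fin 2) ∈ X
  · by_cases h1 : (Sum.inr 1 : Fin n ⊕ Fin 2) ∈ X
    · -- both hubs in X
      have hinr : ∀ j2 : Fin 2, (Sum.inr j2 : Fin n ⊕ Fin 2) ∈ X := by
        intro j2
        rcases fin2_cases j2 with h | h <;> rw [h]
        · exact h0
        · exact h1
      have hform : ∀ p : Fin n × Fin 2, p ∈ (diamondD n σ).cutAt X ↔ Sum.inl p.1 ∉ X := by
        intro p
        rw [dm_mem_cutAt]
        simp [hinr p.2]
      exact Or.inl (star_unique (fun i => Sum.inl i ∉ X) hform)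
    · -- only hub 0 in X
      have hmeml : ∀ i : Fin n, (Sum.inl i ∈ X ↔ σ i = true) := by
        intro i
        constructor
        · intro hin
          rcases bool_fs (σ i) with h | h
          · exact absurd (hsink (i, 1) h hin) h1
          · exact h
        · intro h
          exact hsrc (i, 0) h h0
      have hXeq : X = dmX n σ 0 := by
        ext v
        rcases v with i | j2
        · exact hmeml i
        · show _ ↔ j2 = 0
          rcases fin2_cases j2 with h | h <;> rw [h]
          · simp [h0]
          · simp only [h1, false_iff]
            intro hc
            exact absurd (congrArg Fin.val hc) (by norm_num)
      rw [hXeq, dmSide_cutAt]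
      exact Or.inr ⟨0, rfl⟩
  · by_cases h1 : (Sum.inr 1 : Fin n ⊕ Fin 2) ∈ X
    · -- only hub 1 in X
      have hmeml : ∀ i : Fin n, (Sum.inl i ∈ X ↔ σ i = true) := by
        intro i
        constructor
        · intro hin
          rcases bool_fs (σ i) with h | h
          · exact absurd (hsink (i, 0) h hin) h0
          · exact h
        · intro h
          exact hsrc (i, 1) h h1
      have hXeq : X = dmX n σ 1 := by
        ext v
        rcases v with i | j2
        · exact hmeml i
        · show _ ↔ j2 = 1
          rcases fin2_cases j2 with h | h <;> rw [h]
          · simp only [h0, false_iff]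
            intro hc
            exact absurd (congrArg Fin.val hc) (by norm_num)
          · simp [h1]
      rw [hXeq, dmSide_cutAt]
      exact Or.inr ⟨1, rfl⟩
    · -- no hubs in X
      have hinr : ∀ j2 : Fin 2, (Sum.inr j2 : Fin n ⊕ Fin 2) ∉ X := by
        intro j2
        rcases fin2_cases j2 with h | h <;> rw [h]
        · exact h0
        · exact h1
      have hform : ∀ p : Fin n × Fin 2, p ∈ (diamondD n σ).cutAt X ↔ Sum.inl p.1 ∈ X := by
        intro p
        rw [dm_mem_cutAt]
        simp [hinr p.2]
      exact Or.inl (star_unique (fun i => Sum.inl i ∈ X) hform)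

end ObstDiamond


section ObstDiamond2

open MultiDigraph

variable {n : ℕ} {σ : Fin n → Bool}

lemma dm_mem_side_iff (p : Fin n × Fin 2) (j : Fin 2) :
    p ∈ dmSide n σ j ↔ j = (if σ p.1 then p.2 + 1 else p.2) := by
  show p.2 = dmq σ j p.1 ↔ _
  rw [dmq]
  rcases bool_fs (σ p.1) with h | h <;> rw [h] <;> simp
  · exact eq_comm
  · exact fin2_swap p.2 j

lemma dm_no_oddDijoin (hn : 3 ≤ n) (hodd : Odd (n + 2)) :
    ¬ (diamondD n σ).HasOddDijoin := by
  classical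
  refine no_oddDijoin_of_cover _ (ι := Fin n ⊕ Fin 2)
    (Sum.elim (fun i => dmStar n σ i) (fun j => dmSide n σ j)) ?_ ?_ ?_
  · rintro (i | j)
    · exact dmStar_isDirectedBond hn i
    · exact dmSide_isDirectedBond hn j
  · intro p
    have hset : {i : Fin n ⊕ Fin 2 | p ∈ Sum.elim (fun i => dmStar n σ i)
        (fun j => dmSide n σ j) i}
        = {Sum.inl p.1, Sum.inr (if σ p.1 then p.2 + 1 else p.2)} := by
      ext i
      rcases i with i | j
      · show p ∈ dmStar n σ i ↔ _
        simp only [Set.mem_insert_iff, Set.mem_singleton_iff]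
        constructor
        · intro h
          exact Or.inl (by rw [show p.1 = i from h])
        · rintro (h | h)
          · exact (Sum.inl_injective h).symm
          · exact absurd h (by simp)
      · show p ∈ dmSide n σ j ↔ _
        rw [dm_mem_side_iff]
        simp only [Set.mem_insert_iff, Set.mem_singleton_iff]
        constructor
        · intro h
          exact Or.inr (by rw [h])
        · rintro (h | h)
          · exact absurd h (by simp)
          · exact Sum.inr_injective h
    rw [hset, Set.ncard_pair (by simp)]
    exact ⟨1, rfl⟩
  · simpa using hodd

lemma dm_avoid (hn : 3 ≤ n) (e : (diamondD n σ).E) :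
    ∃ J : Set (diamondD n σ).E, ∀ S : Set (diamondD n σ).E,
      (diamondD n σ).IsDirectedBond S → e ∉ S → Odd (J ∩ S).ncard := by
  classical
  obtain ⟨i₁, hi₁⟩ := fin_exists_ne (by omega : 2 ≤ n) e.1
  set js : Fin 2 := if σ e.1 then e.2 else e.2 + 1 with hjs
  set g : Fin n → Fin 2 := fun i => if i = i₁ then dmq σ js i else dmq σ js i + 1 with hg
  refine ⟨{p : Fin n × Fin 2 | p.1 ≠ e.1 ∧ p.2 = g p.1}, fun S hS heS => ?_⟩
  rcases dm_classify hn hS with ⟨i, rfl⟩ | ⟨j, rfl⟩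
  · have hie : i ≠ e.1 := fun h => heS (show e.1 = i from h.symm)
    have hsing : {p : Fin n × Fin 2 | p.1 ≠ e.1 ∧ p.2 = g p.1} ∩ dmStar n σ i
        = {(i, g i)} := by
      ext p
      simp only [Set.mem_inter_iff, Set.mem_setOf_eq, Set.mem_singleton_iff, Prod.ext_iff]
      show (p.1 ≠ e.1 ∧ p.2 = g p.1) ∧ p.1 = i ↔ _
      constructor
      · rintro ⟨⟨h1, h2⟩, h3⟩
        refine ⟨h3, ?_⟩
        rw [← h3]
        exact h2
      · rintro ⟨h1, h2⟩
        refine ⟨⟨by rw [h1]; exact hie, ?_⟩, h1⟩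
        rw [h1]
        exact h2
    rw [hsing, Set.ncard_singleton]
    exact ⟨0, rfl⟩
  · have hjn : j = js := by
      have hej : ¬ (e ∈ dmSide n σ j) := heS
      rw [dm_mem_side_iff] at hej
      have hj2 := (fin2_ne_iff j _).mp hej
      rw [hjs]
      rcases bool_fs (σ e.1) with h | h <;> rw [h] at hj2 ⊢ <;> simp at hj2 ⊢
      · exact hj2
      · rw [hj2, fin2_add_add]
    subst hjn
    have hsing : {p : Fin n × Fin 2 | p.1 ≠ e.1 ∧ p.2 = g p.1} ∩ dmSide n σ js
        = {(i₁, dmq σ js i₁)} := by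
      ext p
      simp only [Set.mem_inter_iff, Set.mem_setOf_eq, Set.mem_singleton_iff, Prod.ext_iff]
      show (p.1 ≠ e.1 ∧ p.2 = g p.1) ∧ p.2 = dmq σ js p.1 ↔ _
      constructor
      · rintro ⟨⟨h1, h2⟩, h3⟩
        by_cases hpi : p.1 = i₁
        · refine ⟨hpi, ?_⟩
          rw [← hpi]
          exact h3
        · exfalso
          rw [hg] at h2
          simp only [if_neg hpi] at h2
          rw [h2] at h3
          exact fin2_add_one_ne _ h3
      · rintro ⟨h1, h2⟩
        refine ⟨⟨by rw [h1]; exact hi₁, ?_⟩, ?_⟩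
        · rw [h1, h2, hg]
          simp
        · rw [h1, h2]
    rw [hsing, Set.ncard_singleton]
    exact ⟨0, rfl⟩

lemma dm_no_deletable (e : (diamondD n σ).E) : ¬ (diamondD n σ).Deletable e := by
  rintro ⟨-, hpath⟩
  rcases bool_fs (σ e.1) with hσ | hσ
  · rw [dm_tail_snk e hσ, dm_head_snk e hσ] at hpath
    have hclosed : ∀ a b : (diamondD n σ).V, (diamondD n σ).dstepAvoiding e a b →
        a ∈ {v : (diamondD n σ).V | Sum.elim (fun i => σ i = false ∧ i ≠ e.1)
          (fun j2 => j2 = e.2) v} →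
        b ∈ {v : (diamondD n σ).V | Sum.elim (fun i => σ i = false ∧ i ≠ e.1)
          (fun j2 => j2 = e.2) v} := by
      rintro a b ⟨f, hfe, rfl, rfl⟩ ha
      rcases bool_fs (σ f.1) with h | h
      · rw [dm_tail_snk f h] at ha
        rw [dm_head_snk f h]
        have hf2 : f.2 = e.2 := ha
        exact ⟨h, fun hc => hfe (Prod.ext_iff.mpr ⟨hc, hf2⟩)⟩
      · rw [dm_tail_src f h] at ha
        exfalso
        have hcc : σ f.1 = false ∧ f.1 ≠ e.1 := ha
        rw [h] at hcc
        exact Bool.noConfusion hcc.1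
    have hend := walk_closed hclosed hpath (show (e.2 : Fin 2) = e.2 from rfl)
    exact (show σ e.1 = false ∧ e.1 ≠ e.1 from hend).2 rfl
  · rw [dm_tail_src e hσ, dm_head_src e hσ] at hpath
    have hclosed : ∀ a b : (diamondD n σ).V, (diamondD n σ).dstepAvoiding e a b →
        a ∈ {v : (diamondD n σ).V | Sum.elim (fun i => i = e.1 ∨ σ i = false)
          (fun j2 => j2 ≠ e.2) v} →
        b ∈ {v : (diamondD n σ).V | Sum.elim (fun i => i = e.1 ∨ σ i = false)
          (fun j2 => j2 ≠ e.2) v} := by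
      rintro a b ⟨f, hfe, rfl, rfl⟩ ha
      rcases bool_fs (σ f.1) with h | h
      · rw [dm_tail_snk f h] at ha
        rw [dm_head_snk f h]
        exact Or.inr h
      · rw [dm_tail_src f h] at ha
        rw [dm_head_src f h]
        have hcc : f.1 = e.1 ∨ σ f.1 = false := ha
        rcases hcc with h1 | h1
        · show f.2 ≠ e.2
          intro hc
          exact hfe (Prod.ext_iff.mpr ⟨h1, hc⟩)
        · rw [h] at h1
          exact Bool.noConfusion h1
    have hend := walk_closed hclosed hpath (Or.inl rfl)
    exact (show (e.2 : Fin 2) ≠ e.2 from hend) rfl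

lemma dm_no_isolated (hn : 3 ≤ n) (v : (diamondD n σ).V) :
    ¬ (diamondD n σ).Isolated v := by
  intro h
  rcases v with i | j
  · rcases bool_fs (σ i) with hσ | hσ
    · exact (h (i, 0)).2 (dm_head_snk (i, 0) hσ)
    · exact (h (i, 0)).1 (dm_tail_src (i, 0) hσ)
  · rcases bool_fs (σ ⟨0, by omega⟩) with hσ | hσ
    · exact (h (⟨0, by omega⟩, j)).1 (dm_tail_snk _ hσ)
    · exact (h (⟨0, by omega⟩, j)).2 (dm_head_src _ hσ)

end ObstDiamond2

-- STATEMENT 18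
theorem stmt18 (D : MultiDigraph) (h : IsOddDiamond D ∨ IsOddOneDirection D) :
    MinimalObstruction D := by
  rcases h with ⟨n, σ, hn3, hodd, ⟨φ⟩⟩ | ⟨m, n, hm, hn, hodd, ⟨φ⟩⟩
  · exact minimal_of_model φ (dm_no_oddDijoin hn3 hodd) (fun e => dm_no_deletable e)
      (fun v => dm_no_isolated hn3 v) (fun e => dm_avoid hn3 e)
  · exact minimal_of_model φ (oneDir_no_oddDijoin hm hn hodd)
      (fun e => oneDir_no_deletable e) (fun v => oneDir_no_isolated hm hn v)
      (fun e => oneDir_avoid hm hn e)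
end
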